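/- arXiv:2309.16094 — 7 statements merged into one kernel-verified Lean document; each statement's English description precedes it below -/
import Mathlib

section
/- Let a, b ∈ ℂ with a + b = 1, and let y, z ∈ ℂ with |y| < 1 and |z| < 1. Then the infinite product over all pairs of positive integers (j,k) with j ≤ k and gcd(j,k) = 1 of (1/(1 − y^j z^k))^(1/(j^a k^b)) equals exp( Σ_{n=1}^∞ (Σ_{m=1}^n y^m / m^a) · z^n / n^b ). -/
open Complex

private lemma vpv_hasProd_exp {ι : Type*} {f : ι → ℂ} {s : ℂ} (h : HasSum f s) :
    HasProd (fun i => Complex.exp (f i)) (Complex.exp s) := by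
  have := (Complex.continuous_exp.tendsto s).comp h
  simpa [HasProd, Function.comp_def, ← Complex.exp_sum] using this

private lemma vpv_norm_lt {y z : ℂ} (hy : ‖y‖ < 1) (hz : ‖z‖ < 1) {j k : ℕ}
    (hj : 0 < j) (hk : 0 < k) : ‖y ^ j * z ^ k‖ < 1 := by
  rw [norm_mul, norm_pow, norm_pow]
  calc ‖y‖ ^ j * ‖z‖ ^ k ≤ 1 * ‖z‖ ^ k := by
        gcongr
        exact pow_le_one₀ (norm_nonneg _) hy.le
    _ = ‖z‖ ^ k := one_mul _
    _ ≤ ‖z‖ ^ 1 := pow_le_pow_of_le_one (norm_nonneg _) hz.le hk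
    _ < 1 := by simpa using hz

set_option maxHeartbeats 1000000 in
private lemma vpv_summable_aux (c : ℂ) {x : ℂ} (hx : ‖x‖ < 1) :
    Summable fun n : ℕ => ‖x ^ n / (n : ℂ) ^ c‖ := by
  set K : ℕ := ⌈|c.re|⌉₊ with hK
  have hg : Summable (fun n : ℕ => ((n : ℝ)) ^ K * ‖x‖ ^ n) :=
    summable_pow_mul_geometric_of_norm_lt_one K
      (by rwa [Real.norm_eq_abs, _root_.abs_of_nonneg (norm_nonneg x)])
  have hg' : Summable (fun n : ℕ => (((n + 1 : ℕ)) : ℝ) ^ K * ‖x‖ ^ (n + 1)) :=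
    (summable_nat_add_iff 1).mpr hg
  refine (summable_nat_add_iff 1).mp (hg'.of_nonneg_of_le (fun n => norm_nonneg _) fun n => ?_)
  have hN1 : (1 : ℝ) ≤ ((n + 1 : ℕ) : ℝ) := by exact_mod_cast Nat.one_le_iff_ne_zero.mpr (Nat.succ_ne_zero n)
  have hN0 : (0 : ℝ) < ((n + 1 : ℕ) : ℝ) := by linarith
  rw [norm_div, norm_pow, Complex.norm_natCast_cpow_of_pos (Nat.succ_pos n)]
  rw [div_le_iff₀ (Real.rpow_pos_of_pos hN0 _)]
  have h1 : (1 : ℝ) ≤ ((n + 1 : ℕ) : ℝ) ^ ((K : ℝ) + c.re) := by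
    apply Real.one_le_rpow hN1
    have : |c.re| ≤ (K : ℝ) := Nat.le_ceil _
    have := neg_abs_le c.re
    linarith
  rw [Real.rpow_add hN0, Real.rpow_natCast] at h1
  calc ‖x‖ ^ (n + 1) = 1 * ‖x‖ ^ (n + 1) := (one_mul _).symm
    _ ≤ (((n + 1 : ℕ) : ℝ) ^ K * ((n + 1 : ℕ) : ℝ) ^ c.re) * ‖x‖ ^ (n + 1) := by
        gcongr
    _ = ((n + 1 : ℕ) : ℝ) ^ K * ‖x‖ ^ (n + 1) * ((n + 1 : ℕ) : ℝ) ^ c.re := by ring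

private def vpvEquivST :
    {p : ℕ × ℕ // 0 < p.1 ∧ 0 < p.2 ∧ p.1 ≤ p.2 ∧ Nat.gcd p.1 p.2 = 1} × ℕ+ ≃
    {p : ℕ × ℕ // 0 < p.1 ∧ 0 < p.2 ∧ p.1 ≤ p.2} where
  toFun q := ⟨((q.2 : ℕ) * q.1.1.1, (q.2 : ℕ) * q.1.1.2),
    mul_pos q.2.pos q.1.2.1, mul_pos q.2.pos q.1.2.2.1,
    Nat.mul_le_mul_left _ q.1.2.2.2.1⟩
  invFun p :=
    (⟨(p.1.1 / Nat.gcd p.1.1 p.1.2, p.1.2 / Nat.gcd p.1.1 p.1.2), by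
      have hg : 0 < Nat.gcd p.1.1 p.1.2 := Nat.gcd_pos_of_pos_left _ p.2.1
      exact ⟨Nat.div_pos (Nat.le_of_dvd p.2.1 (Nat.gcd_dvd_left _ _)) hg,
        Nat.div_pos (Nat.le_of_dvd p.2.2.1 (Nat.gcd_dvd_right _ _)) hg,
        Nat.div_le_div_right p.2.2.2,
        Nat.coprime_div_gcd_div_gcd hg⟩⟩,
     ⟨Nat.gcd p.1.1 p.1.2, Nat.gcd_pos_of_pos_left _ p.2.1⟩)
  left_inv := by
    rintro ⟨⟨⟨j, k⟩, hj, hk, hjk, hcop⟩, r⟩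
    have hg : Nat.gcd ((r : ℕ) * j) ((r : ℕ) * k) = (r : ℕ) := by
      rw [Nat.gcd_mul_left, hcop, mul_one]
    refine Prod.ext ?_ ?_
    · apply Subtype.ext
      simp only [hg]
      exact Prod.ext (Nat.mul_div_cancel_left j r.pos) (Nat.mul_div_cancel_left k r.pos)
    · exact Subtype.ext hg
  right_inv := by
    rintro ⟨⟨J, K⟩, hJ, hK, hJK⟩
    apply Subtype.ext
    exact Prod.ext (Nat.mul_div_cancel' (Nat.gcd_dvd_left _ _))
      (Nat.mul_div_cancel' (Nat.gcd_dvd_right _ _))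

private def vpvEquivTN :
    {p : ℕ × ℕ // 0 < p.1 ∧ 0 < p.2 ∧ p.1 ≤ p.2} ≃
    Σ n : ℕ+, {m : ℕ // m ∈ Finset.Icc 1 (n : ℕ)} where
  toFun p := ⟨⟨p.1.2, p.2.2.1⟩, ⟨p.1.1, Finset.mem_Icc.mpr ⟨p.2.1, p.2.2.2⟩⟩⟩
  invFun q := ⟨(q.2.1, (q.1 : ℕ)),
    (Finset.mem_Icc.mp q.2.2).1, q.1.pos, (Finset.mem_Icc.mp q.2.2).2⟩
  left_inv p := rfl
  right_inv q := rfl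

private noncomputable def vpvF (a b y z : ℂ)
    (p : {p : ℕ × ℕ // 0 < p.1 ∧ 0 < p.2 ∧ p.1 ≤ p.2}) : ℂ :=
  y ^ p.1.1 * z ^ p.1.2 / ((p.1.1 : ℂ) ^ a * (p.1.2 : ℂ) ^ b)

private noncomputable def vpvG (a b y z : ℂ)
    (q : {p : ℕ × ℕ // 0 < p.1 ∧ 0 < p.2 ∧ p.1 ≤ p.2 ∧ Nat.gcd p.1 p.2 = 1} × ℕ+) : ℂ :=
  1 / ((q.1.1.1 : ℂ) ^ a * (q.1.1.2 : ℂ) ^ b) *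
    ((y ^ q.1.1.1 * z ^ q.1.1.2) ^ (q.2 : ℕ) / ((q.2 : ℕ) : ℂ))

private noncomputable def vpvL (a b y z : ℂ)
    (p : {p : ℕ × ℕ // 0 < p.1 ∧ 0 < p.2 ∧ p.1 ≤ p.2 ∧ Nat.gcd p.1 p.2 = 1}) : ℂ :=
  -Complex.log (1 - y ^ p.1.1 * z ^ p.1.2) * (1 / ((p.1.1 : ℂ) ^ a * (p.1.2 : ℂ) ^ b))

private lemma vpv_hGF {a b : ℂ} (hab : a + b = 1) (y z : ℂ)
    (q : {p : ℕ × ℕ // 0 < p.1 ∧ 0 < p.2 ∧ p.1 ≤ p.2 ∧ Nat.gcd p.1 p.2 = 1} × ℕ+) :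
    vpvG a b y z q = vpvF a b y z (vpvEquivST q) := by
  obtain ⟨⟨⟨j, k⟩, hj, hk, hjk, hcop⟩, r⟩ := q
  have hr0 : ((r : ℕ) : ℂ) ≠ 0 := Nat.cast_ne_zero.mpr r.pos.ne'
  show 1 / ((j : ℂ) ^ a * (k : ℂ) ^ b) * ((y ^ j * z ^ k) ^ (r : ℕ) / ((r : ℕ) : ℂ)) =
    y ^ ((r : ℕ) * j) * z ^ ((r : ℕ) * k) /
      ((((r : ℕ) * j : ℕ) : ℂ) ^ a * (((r : ℕ) * k : ℕ) : ℂ) ^ b)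
  have hden : (((r : ℕ) : ℂ) ^ a * (j : ℂ) ^ a) * (((r : ℕ) : ℂ) ^ b * (k : ℂ) ^ b)
      = ((r : ℕ) : ℂ) * ((j : ℂ) ^ a * (k : ℂ) ^ b) := by
    calc (((r : ℕ) : ℂ) ^ a * (j : ℂ) ^ a) * (((r : ℕ) : ℂ) ^ b * (k : ℂ) ^ b)
        = (((r : ℕ) : ℂ) ^ a * ((r : ℕ) : ℂ) ^ b) * ((j : ℂ) ^ a * (k : ℂ) ^ b) := by ring
      _ = ((r : ℕ) : ℂ) ^ (a + b) * ((j : ℂ) ^ a * (k : ℂ) ^ b) := by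
          rw [cpow_add _ _ hr0]
      _ = ((r : ℕ) : ℂ) * ((j : ℂ) ^ a * (k : ℂ) ^ b) := by rw [hab, cpow_one]
  rw [Nat.cast_mul, Nat.cast_mul, natCast_mul_natCast_cpow, natCast_mul_natCast_cpow, hden,
    mul_pow, ← pow_mul, ← pow_mul, mul_comm j (r : ℕ), mul_comm k (r : ℕ)]
  ring

private lemma vpv_hF {y z : ℂ} (hy : ‖y‖ < 1) (hz : ‖z‖ < 1) (a b : ℂ) :
    Summable (vpvF a b y z) := by
  have hf0 : Summable (fun p : ℕ × ℕ => y ^ p.1 / (p.1 : ℂ) ^ a * (z ^ p.2 / (p.2 : ℂ) ^ b)) := by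
    apply Summable.of_norm
    refine (Summable.mul_of_nonneg (vpv_summable_aux a hy) (vpv_summable_aux b hz)
      (fun n => norm_nonneg _) (fun n => norm_nonneg _)).congr fun p => ?_
    exact (norm_mul _ _).symm
  refine (hf0.comp_injective Subtype.val_injective).congr fun p => ?_
  show y ^ p.1.1 / (p.1.1 : ℂ) ^ a * (z ^ p.1.2 / (p.1.2 : ℂ) ^ b) = vpvF a b y z p
  rw [vpvF, div_mul_div_comm]

private lemma vpv_hL {y z : ℂ} (hy : ‖y‖ < 1) (hz : ‖z‖ < 1) (a b : ℂ)
    (p : {p : ℕ × ℕ // 0 < p.1 ∧ 0 < p.2 ∧ p.1 ≤ p.2 ∧ Nat.gcd p.1 p.2 = 1}) :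
    HasSum (fun r : ℕ+ => vpvG a b y z (p, r)) (vpvL a b y z p) := by
  obtain ⟨⟨j, k⟩, hj, hk, hjk, hcop⟩ := p
  have hw : ‖y ^ j * z ^ k‖ < 1 := vpv_norm_lt hy hz hj hk
  have h1 : HasSum (fun n : ℕ => (y ^ j * z ^ k) ^ n / n) (-log (1 - y ^ j * z ^ k)) :=
    hasSum_taylorSeries_neg_log hw
  have h2 : HasSum (fun r : ℕ+ => (y ^ j * z ^ k) ^ (r : ℕ) / ((r : ℕ) : ℂ))
      (-log (1 - y ^ j * z ^ k)) := by
    refine (Function.Injective.hasSum_iff PNat.coe_injective ?_).mpr h1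
    intro x hx
    have hx0 : x = 0 := by
      by_contra h
      exact hx ⟨⟨x, Nat.pos_of_ne_zero h⟩, rfl⟩
    simp [hx0]
  have h3 := h2.mul_left (1 / ((j : ℂ) ^ a * (k : ℂ) ^ b))
  rw [show vpvL a b y z ⟨(j, k), hj, hk, hjk, hcop⟩
      = 1 / ((j : ℂ) ^ a * (k : ℂ) ^ b) * -log (1 - y ^ j * z ^ k) from mul_comm _ _]
  exact h3

private lemma vpv_factor {y z : ℂ} (hy : ‖y‖ < 1) (hz : ‖z‖ < 1) (a b : ℂ)
    (p : {p : ℕ × ℕ // 0 < p.1 ∧ 0 < p.2 ∧ p.1 ≤ p.2 ∧ Nat.gcd p.1 p.2 = 1}) :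
    (1 / (1 - y ^ p.1.1 * z ^ p.1.2)) ^ (1 / ((p.1.1 : ℂ) ^ a * (p.1.2 : ℂ) ^ b)) =
    Complex.exp (vpvL a b y z p) := by
  obtain ⟨⟨j, k⟩, hj, hk, hjk, hcop⟩ := p
  have hw : ‖y ^ j * z ^ k‖ < 1 := vpv_norm_lt hy hz hj hk
  have h1 : 1 - y ^ j * z ^ k ≠ 0 := by
    intro h
    have : y ^ j * z ^ k = 1 := by linear_combination -h
    rw [this] at hw
    simp at hw
  have harg : (1 - y ^ j * z ^ k).arg ≠ Real.pi := by
    have hre : 0 < (1 - y ^ j * z ^ k).re := by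
      have h2 : (y ^ j * z ^ k).re ≤ ‖y ^ j * z ^ k‖ := Complex.re_le_norm _
      simp only [Complex.sub_re, Complex.one_re]
      linarith
    intro h
    rw [Complex.arg_eq_pi_iff] at h
    linarith [h.1]
  show (1 / (1 - y ^ j * z ^ k)) ^ (1 / ((j : ℂ) ^ a * (k : ℂ) ^ b)) = _
  rw [one_div (1 - y ^ j * z ^ k),
    Complex.cpow_def_of_ne_zero (inv_ne_zero h1), Complex.log_inv _ harg]
  rfl

private lemma vpv_tsumF {y z : ℂ} (hy : ‖y‖ < 1) (hz : ‖z‖ < 1) (a b : ℂ) :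
    ∑' p, vpvF a b y z p =
    ∑' n : ℕ+, (∑ m ∈ Finset.Icc 1 (n : ℕ), y ^ m / (m : ℂ) ^ a) * z ^ (n : ℕ) /
      ((n : ℕ) : ℂ) ^ b := by
  have hF : Summable (vpvF a b y z) := vpv_hF hy hz a b
  rw [← vpvEquivTN.symm.tsum_eq (vpvF a b y z)]
  rw [Summable.tsum_sigma (f := fun c => vpvF a b y z (vpvEquivTN.symm c)) (vpvEquivTN.symm.summable_iff.mpr hF)]
  refine tsum_congr fun n => ?_
  have h1 : (∑' m : {m : ℕ // m ∈ Finset.Icc 1 (n : ℕ)},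
      vpvF a b y z (vpvEquivTN.symm ⟨n, m⟩)) =
      ∑' m : {m : ℕ // m ∈ Finset.Icc 1 (n : ℕ)},
        y ^ (m : ℕ) * z ^ (n : ℕ) / (((m : ℕ) : ℂ) ^ a * (((n : ℕ) : ℕ) : ℂ) ^ b) :=
    tsum_congr fun m => rfl
  rw [h1, Finset.tsum_subtype (Finset.Icc 1 (n : ℕ))
    (fun m => y ^ m * z ^ (n : ℕ) / ((m : ℂ) ^ a * (((n : ℕ) : ℕ) : ℂ) ^ b))]
  rw [Finset.sum_mul, Finset.sum_div]
  exact Finset.sum_congr rfl fun m hm => by push_cast; ring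

/-- The 2D first-quadrant triangle Visible Point Vector identity. -/
theorem stmt_0 (a b : ℂ) (hab : a + b = 1) (y z : ℂ) (hy : ‖y‖ < 1) (hz : ‖z‖ < 1) :
    (∏' p : {p : ℕ × ℕ // 0 < p.1 ∧ 0 < p.2 ∧ p.1 ≤ p.2 ∧ Nat.gcd p.1 p.2 = 1},
      (1 / (1 - y ^ p.1.1 * z ^ p.1.2)) ^ (1 / ((p.1.1 : ℂ) ^ a * (p.1.2 : ℂ) ^ b))) =
    Complex.exp (∑' n : ℕ+,
      (∑ m ∈ Finset.Icc 1 (n : ℕ), y ^ m / (m : ℂ) ^ a) * z ^ (n : ℕ) / ((n : ℕ) : ℂ) ^ b) := by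
  have hF : Summable (vpvF a b y z) := vpv_hF hy hz a b
  have hG : Summable (vpvG a b y z) :=
    ((vpvEquivST.summable_iff (f := vpvF a b y z)).mpr hF).congr
      fun q => (vpv_hGF hab y z q).symm
  have hL := vpv_hL hy hz a b
  have hLs : Summable (vpvL a b y z) := hG.prod.congr fun p => (hL p).tsum_eq
  have key : ∑' p, vpvL a b y z p = ∑' n : ℕ+,
      (∑ m ∈ Finset.Icc 1 (n : ℕ), y ^ m / (m : ℂ) ^ a) * z ^ (n : ℕ) /
        ((n : ℕ) : ℂ) ^ b := by
    rw [(hG.hasSum.prod_fiberwise hL).tsum_eq, tsum_congr (vpv_hGF hab y z),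
      vpvEquivST.tsum_eq (vpvF a b y z), vpv_tsumF hy hz a b]
  calc (∏' p : {p : ℕ × ℕ // 0 < p.1 ∧ 0 < p.2 ∧ p.1 ≤ p.2 ∧ Nat.gcd p.1 p.2 = 1},
      (1 / (1 - y ^ p.1.1 * z ^ p.1.2)) ^ (1 / ((p.1.1 : ℂ) ^ a * (p.1.2 : ℂ) ^ b)))
      = ∏' p, Complex.exp (vpvL a b y z p) := tprod_congr (vpv_factor hy hz a b)
    _ = Complex.exp (∑' p, vpvL a b y z p) := (vpv_hasProd_exp hLs.hasSum).tprod_eq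
    _ = _ := by rw [key]
end

section
/- Let y, z ∈ ℂ with |y| < 1, |z| < 1 and y ≠ 1. Then the infinite product over all pairs of positive integers (j,k) with j ≤ k and gcd(j,k) = 1 of (1/(1 − y^j z^k))^(1/k) equals ((1 − yz)/(1 − z))^(y/(1 − y)). -/
open Complex

lemma aux_re_pos {w : ℂ} (hw : ‖w‖ < 1) : 0 < (1 - w).re := by
  have := Complex.re_le_norm w
  simp only [Complex.sub_re, Complex.one_re]
  have : w.re < 1 := lt_of_le_of_lt (by simpa using this) hw
  linarith

lemma aux_ne_zero {w : ℂ} (hw : ‖w‖ < 1) : (1 : ℂ) - w ≠ 0 := by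
  intro h
  have := aux_re_pos hw
  rw [h] at this; simp at this

lemma aux_arg_lt {w : ℂ} (hw : ‖w‖ < 1) : |(1 - w).arg| < Real.pi / 2 :=
  Complex.abs_arg_lt_pi_div_two_iff.2 (Or.inl (aux_re_pos hw))

lemma aux_arg_ne_pi {w : ℂ} (hw : ‖w‖ < 1) : (1 - w).arg ≠ Real.pi := by
  intro h
  have := aux_arg_lt hw
  rw [h] at this
  rw [abs_of_pos Real.pi_pos] at this
  linarith [Real.pi_pos]

lemma aux_log_div {a b : ℂ} (ha : ‖a‖ < 1) (hb : ‖b‖ < 1) :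
    Complex.log ((1 - a) / (1 - b)) = Complex.log (1 - a) - Complex.log (1 - b) := by
  have ha0 := aux_ne_zero ha
  have hb0 := aux_ne_zero hb
  have hexp : Complex.exp (Complex.log (1 - a) - Complex.log (1 - b)) = (1 - a) / (1 - b) := by
    rw [Complex.exp_sub, Complex.exp_log ha0, Complex.exp_log hb0]
  have h1 := aux_arg_lt ha
  have h2 := aux_arg_lt hb
  rw [abs_lt] at h1 h2
  rw [← hexp, Complex.log_exp] <;> simp only [Complex.sub_im, Complex.log_im] <;> linarith

noncomputable def pairEquiv :
    ({p : ℕ × ℕ // 0 < p.1 ∧ 0 < p.2 ∧ p.1 ≤ p.2 ∧ Nat.gcd p.1 p.2 = 1} × {m : ℕ // 0 < m}) ≃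
    {q : ℕ × ℕ // 0 < q.1 ∧ q.1 ≤ q.2} := by
  refine Equiv.ofBijective (fun x => ⟨(x.1.1.1 * x.2.1, x.1.1.2 * x.2.1), ?_, ?_⟩) ⟨?_, ?_⟩
  · exact Nat.mul_pos x.1.2.1 x.2.2
  · exact Nat.mul_le_mul_right _ x.1.2.2.2.1
  · rintro ⟨⟨⟨j1, k1⟩, hj1, hk1, hjk1, hg1⟩, ⟨m1, hm1⟩⟩ ⟨⟨⟨j2, k2⟩, hj2, hk2, hjk2, hg2⟩, ⟨m2, hm2⟩⟩ h
    simp only [Subtype.mk.injEq, Prod.mk.injEq] at h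
    obtain ⟨h1, h2⟩ := h
    have hm : m1 = m2 := by
      have e1 : Nat.gcd (j1 * m1) (k1 * m1) = m1 := by
        rw [Nat.gcd_mul_right, hg1, one_mul]
      have e2 : Nat.gcd (j2 * m2) (k2 * m2) = m2 := by
        rw [Nat.gcd_mul_right, hg2, one_mul]
      rw [← e1, h1, h2, e2]
    subst hm
    have hj : j1 = j2 := Nat.eq_of_mul_eq_mul_right hm1 h1
    have hk : k1 = k2 := Nat.eq_of_mul_eq_mul_right hm1 h2
    simp [hj, hk]
  · rintro ⟨⟨J, K⟩, hJ, hJK⟩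
    have hK : 0 < K := lt_of_lt_of_le hJ hJK
    set m := Nat.gcd J K with hm
    have hm0 : 0 < m := Nat.gcd_pos_of_pos_left _ hJ
    refine ⟨⟨⟨(J / m, K / m), ?_, ?_, ?_, ?_⟩, ⟨m, hm0⟩⟩, ?_⟩
    · exact Nat.div_pos (Nat.le_of_dvd hJ (Nat.gcd_dvd_left _ _)) hm0
    · exact Nat.div_pos (Nat.le_of_dvd hK (Nat.gcd_dvd_right _ _)) hm0
    · exact Nat.div_le_div_right hJK
    · exact Nat.coprime_div_gcd_div_gcd hm0
    · simp only [Subtype.mk.injEq, Prod.mk.injEq]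
      exact ⟨Nat.div_mul_cancel (Nat.gcd_dvd_left _ _), Nat.div_mul_cancel (Nat.gcd_dvd_right _ _)⟩

lemma fiber_hasSum {w : ℂ} (hw : ‖w‖ < 1) {k : ℕ} (hk : 0 < k) :
    HasSum (fun m : {m : ℕ // 0 < m} => w ^ (m : ℕ) / ((k : ℂ) * (m : ℕ)))
      ((1 / (k : ℂ)) * (-Complex.log (1 - w))) := by
  have h := (Complex.hasSum_taylorSeries_neg_log hw).mul_left (1 / (k : ℂ))
  have h2 : HasSum (fun n : ℕ => w ^ n / ((k : ℂ) * n))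
      ((1 / (k : ℂ)) * (-Complex.log (1 - w))) := by
    convert h using 2 with n
    · rfl
    rw [div_mul_div_comm, one_mul]
  have hsupp : Function.support (fun n : ℕ => w ^ n / ((k : ℂ) * n)) ⊆ {n : ℕ | 0 < n} := by
    intro n hn
    rcases Nat.eq_zero_or_pos n with rfl | h
    · simp [Function.mem_support] at hn
    · exact h
  exact (hasSum_subtype_iff_of_support_subset hsupp).2 h2


theorem stmt_1 (y z : ℂ) (hy : ‖y‖ < 1) (hz : ‖z‖ < 1) (hy1 : y ≠ 1) :
    (∏' p : {p : ℕ × ℕ // 0 < p.1 ∧ 0 < p.2 ∧ p.1 ≤ p.2 ∧ Nat.gcd p.1 p.2 = 1},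
      (1 / (1 - y ^ p.1.1 * z ^ p.1.2)) ^ (1 / (p.1.2 : ℂ))) =
    ((1 - y * z) / (1 - z)) ^ (y / (1 - y)) := by
  have hy1' : (1 : ℂ) - y ≠ 0 := sub_ne_zero.2 (Ne.symm hy1)
  have hyz : ‖y * z‖ < 1 := by
    rw [norm_mul]
    calc ‖y‖ * ‖z‖ ≤ 1 * ‖z‖ := by
          exact mul_le_mul_of_nonneg_right hy.le (norm_nonneg z)
      _ < 1 := by rwa [one_mul]
  set s : ℂ := y / (1 - y) with hs
  set L : ℂ := Complex.log (1 - y * z) - Complex.log (1 - z) with hL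
  set T : ℂ := s * L with hT
  set E : ℕ × ℕ → ℂ := fun q => y ^ q.1 * z ^ q.2 / (q.2 : ℂ) with hE
  set S : Set (ℕ × ℕ) := {q | 0 < q.1 ∧ q.1 ≤ q.2} with hSdef
  set F : ℕ × ℕ → ℂ := S.indicator E with hF
  -- smallness of w = y^j z^k for j,k ≥ 1
  have hsmall : ∀ (j k : ℕ), 0 < j → 0 < k → ‖y ^ j * z ^ k‖ < 1 := by
    intro j k hj hk
    rw [norm_mul, norm_pow, norm_pow]
    calc ‖y‖ ^ j * ‖z‖ ^ k ≤ ‖y‖ ^ j * 1 := by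
          exact mul_le_mul_of_nonneg_left (pow_le_one₀ (norm_nonneg z) hz.le)
            (pow_nonneg (norm_nonneg y) j)
      _ = ‖y‖ ^ j := mul_one _
      _ < 1 := pow_lt_one₀ (norm_nonneg y) hy hj.ne'
  -- Step 1: summability of F
  have hFsummable : Summable F := by
    apply Summable.of_norm_bounded (g := fun q : ℕ × ℕ => ‖y‖ ^ q.1 * ‖z‖ ^ q.2)
    · exact (summable_geometric_of_lt_one (norm_nonneg y) hy).mul_of_nonneg
        (summable_geometric_of_lt_one (norm_nonneg z) hz)
        (fun n => pow_nonneg (norm_nonneg y) n) (fun n => pow_nonneg (norm_nonneg z) n)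
    · intro q
      rw [hF]
      by_cases hq : q ∈ S
      · rw [Set.indicator_of_mem hq, hE]
        simp only [norm_div, norm_mul, norm_pow]
        rcases hq with ⟨h1, h2⟩
        have hq2 : (1 : ℝ) ≤ ‖(q.2 : ℂ)‖ := by
          rw [Complex.norm_natCast]
          exact_mod_cast Nat.one_le_iff_ne_zero.2 (lt_of_lt_of_le h1 h2).ne'
        exact div_le_self (by positivity) hq2
      · rw [Set.indicator_of_notMem hq]
        simp only [norm_zero]
        positivity
  -- Step 2: value of the sum of F
  have houter : HasSum (fun K : ℕ => s * (z ^ K / K - (y * z) ^ K / K)) T := by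
    have h1 := Complex.hasSum_taylorSeries_neg_log hz
    have h2 := Complex.hasSum_taylorSeries_neg_log hyz
    have := (h1.sub h2).mul_left s
    convert this using 1
    · rfl
    rw [hT, hL]; ring
  have hFsum : HasSum F T := by
    have htsum : ∑' q, F q = T := by
      have hswap : Summable (F ∘ (Equiv.prodComm ℕ ℕ)) :=
        (Equiv.prodComm ℕ ℕ).summable_iff.2 hFsummable
      have e1 : ∑' q, F q = ∑' q : ℕ × ℕ, F ((Equiv.prodComm ℕ ℕ) q) :=
        ((Equiv.prodComm ℕ ℕ).tsum_eq F).symm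
      have e2 : ∑' q : ℕ × ℕ, F ((Equiv.prodComm ℕ ℕ) q) =
          ∑' (K : ℕ) (J : ℕ), F ((Equiv.prodComm ℕ ℕ) (K, J)) :=
        Summable.tsum_prod' hswap hswap.prod_factor
      rw [e1, e2]
      simp only [Equiv.prodComm_apply, Prod.swap_prod_mk]
      -- inner sum: for each K, ∑' J, F (J, K)
      have hinner : ∀ K : ℕ, ∑' J : ℕ, F (J, K) = s * (z ^ K / K - (y * z) ^ K / K) := by
        intro K
        have hfin : ∀ J ∉ Finset.Icc 1 K, F (J, K) = 0 := by
          intro J hJ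
          rw [hF, Set.indicator_of_notMem]
          rw [hSdef]
          simp only [Finset.mem_Icc, not_and_or, not_le] at hJ
          intro hmem
          rcases hmem with ⟨ha, hb⟩
          rcases hJ with h | h
          · omega
          · omega
        rw [tsum_eq_sum hfin]
        have hval : ∀ J ∈ Finset.Icc 1 K, F (J, K) = y ^ J * (z ^ K / K) := by
          intro J hJ
          simp only [Finset.mem_Icc] at hJ
          rw [hF, Set.indicator_of_mem, hE]
          · ring
          · exact ⟨hJ.1, hJ.2⟩
        rw [Finset.sum_congr rfl hval, ← Finset.sum_mul]
        have hicc : Finset.Icc 1 K = Finset.Ico 1 (K + 1) := by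
          rw [Nat.Icc_eq_range', Nat.Ico_eq_range']
        rw [hicc, geom_sum_Ico hy1 (by omega)]
        rcases Nat.eq_zero_or_pos K with rfl | hK
        · simp
        · have hKC : (K : ℂ) ≠ 0 := Nat.cast_ne_zero.2 hK.ne'
          have hy1'' : y - 1 ≠ 0 := sub_ne_zero.2 hy1
          rw [hs, mul_pow]
          field_simp [hKC, hy1', hy1'']
          ring
      exact tsum_congr hinner ▸ houter.tsum_eq ▸ rfl
    exact htsum ▸ hFsummable.hasSum
  -- Step 3: sum over the subtype
  have hsub : HasSum (fun q : {q : ℕ × ℕ // 0 < q.1 ∧ q.1 ≤ q.2} => E q) T := by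
    exact (hasSum_subtype_iff_indicator (s := S) (f := E)).2 hFsum
  have hg := (Equiv.hasSum_iff pairEquiv).2 hsub
  -- Step 4: per-fiber sums
  have hfib : ∀ p : {p : ℕ × ℕ // 0 < p.1 ∧ 0 < p.2 ∧ p.1 ≤ p.2 ∧ Nat.gcd p.1 p.2 = 1},
      HasSum (fun m : {m : ℕ // 0 < m} =>
        ((fun q : {q : ℕ × ℕ // 0 < q.1 ∧ q.1 ≤ q.2} => E q) ∘ pairEquiv) (p, m))
      ((1 / (p.1.2 : ℂ)) * (-Complex.log (1 - y ^ p.1.1 * z ^ p.1.2))) := by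
    intro p
    obtain ⟨hj, hk, hjk, hcop⟩ := p.2
    have hw : ‖y ^ p.1.1 * z ^ p.1.2‖ < 1 := hsmall _ _ hj hk
    have h := fiber_hasSum hw hk
    refine HasSum.congr_fun h ?_
    intro m
    show y ^ (p.1.1 * (m : ℕ)) * z ^ (p.1.2 * (m : ℕ)) / (((p.1.2 * (m : ℕ) : ℕ)) : ℂ) =
      (y ^ p.1.1 * z ^ p.1.2) ^ (m : ℕ) / ((p.1.2 : ℂ) * (m : ℕ))
    push_cast
    rw [mul_pow, pow_mul, pow_mul]
  -- Step 5: exponentiate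
  have hprod := hg.cexp
  have hfibexp : ∀ p : {p : ℕ × ℕ // 0 < p.1 ∧ 0 < p.2 ∧ p.1 ≤ p.2 ∧ Nat.gcd p.1 p.2 = 1},
      HasProd (fun m : {m : ℕ // 0 < m} =>
        (Complex.exp ∘ ((fun q : {q : ℕ × ℕ // 0 < q.1 ∧ q.1 ≤ q.2} => E q) ∘ pairEquiv)) (p, m))
      ((1 / (1 - y ^ p.1.1 * z ^ p.1.2)) ^ (1 / (p.1.2 : ℂ))) := by
    intro p
    obtain ⟨hj, hk, hjk, hcop⟩ := p.2
    have hw : ‖y ^ p.1.1 * z ^ p.1.2‖ < 1 := hsmall _ _ hj hk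
    have hw0 : (1 : ℂ) - y ^ p.1.1 * z ^ p.1.2 ≠ 0 := aux_ne_zero hw
    have h := (hfib p).cexp
    have hval : Complex.exp ((1 / (p.1.2 : ℂ)) * (-Complex.log (1 - y ^ p.1.1 * z ^ p.1.2))) =
        (1 / (1 - y ^ p.1.1 * z ^ p.1.2)) ^ (1 / (p.1.2 : ℂ)) := by
      rw [Complex.cpow_def_of_ne_zero (one_div_ne_zero hw0), one_div (1 - y ^ p.1.1 * z ^ p.1.2),
        Complex.log_inv _ (aux_arg_ne_pi hw)]
      ring_nf
    rw [← hval]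
    exact h
  have hmain := hprod.prod_fiberwise hfibexp
  rw [hmain.tprod_eq]
  have hdiv_ne : (1 - y * z) / (1 - z) ≠ 0 := div_ne_zero (aux_ne_zero hyz) (aux_ne_zero hz)
  rw [Complex.cpow_def_of_ne_zero hdiv_ne, aux_log_div hyz hz]
  exact congrArg Complex.exp (by rw [hT, hL]; ring)
end

section
/- Let y, z ∈ ℂ with |y| < 1, |z| < 1 and y ≠ 1. Then the infinite product over all pairs of positive integers (j,k) with j ≤ k and gcd(j,k) = 1 of (1 − y^j z^k)^(1/k) equals ((1 − z)/(1 − yz))^(y/(1 − y)). -/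
open Complex

theorem stmt_2 (y z : ℂ) (hy : ‖y‖ < 1) (hz : ‖z‖ < 1) (hy1 : y ≠ 1) :
    (∏' p : {p : ℕ × ℕ // 0 < p.1 ∧ 0 < p.2 ∧ p.1 ≤ p.2 ∧ Nat.gcd p.1 p.2 = 1},
      (1 - y ^ p.1.1 * z ^ p.1.2) ^ (1 / (p.1.2 : ℂ))) =
    ((1 - z) / (1 - y * z)) ^ (y / (1 - y)) := by
  classical
  set S := {p : ℕ × ℕ // 0 < p.1 ∧ 0 < p.2 ∧ p.1 ≤ p.2 ∧ Nat.gcd p.1 p.2 = 1} with hS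
  set T := {q : ℕ × ℕ // 0 < q.1 ∧ q.1 ≤ q.2} with hT
  set N := {n : ℕ // 0 < n} with hN
  -- basic nonvanishing facts
  have hne : ∀ w : ℂ, ‖w‖ < 1 → 1 - w ≠ 0 := by
    intro w hw
    rw [sub_ne_zero]
    intro h
    rw [← h] at hw
    simp at hw
  have hyz : ‖y * z‖ < 1 := by
    rw [norm_mul]
    nlinarith [norm_nonneg y, norm_nonneg z]
  have hy1' : (1 : ℂ) - y ≠ 0 := by
    rw [sub_ne_zero]; exact fun h => hy1 h.symm
  have hwlt : ∀ a b : ℕ, 0 < a → 0 < b → ‖y ^ a * z ^ b‖ < 1 := by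
    intro a b ha hb
    rw [norm_mul, norm_pow, norm_pow]
    have h1 : ‖y‖ ^ a ≤ 1 := pow_le_one₀ (norm_nonneg _) hy.le
    have h2 : ‖z‖ ^ b < 1 := pow_lt_one₀ (norm_nonneg _) hz hb.ne'
    nlinarith [pow_nonneg (norm_nonneg y) a, pow_nonneg (norm_nonneg z) b]
  set B : ℂ := (y / (1 - y)) * (Complex.log (1 - z) - Complex.log (1 - y * z)) with hB
  set f : S → ℂ := fun p => 1 / (p.1.2 : ℂ) * Complex.log (1 - y ^ p.1.1 * z ^ p.1.2) with hf
  set h : T → ℂ := fun q => -(y ^ q.1.1 * z ^ q.1.2) / (q.1.2 : ℂ) with hh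
  set H : ℕ × ℕ → ℂ := fun q =>
    if 1 ≤ q.2 ∧ q.2 ≤ q.1 then -(y ^ q.2 * z ^ q.1) / (q.1 : ℂ) else 0 with hH
  set g : ℕ → ℂ := fun b => (y / (1 - y)) * ((y * z) ^ b / b - z ^ b / b) with hg
  set gg : S × N → ℂ := fun pn =>
    -((y ^ pn.1.1.1 * z ^ pn.1.1.2) ^ (pn.2 : ℕ)) / ((pn.1.1.2 : ℂ) * (pn.2 : ℕ)) with hgg
  set r : ℝ := max ‖y‖ ‖z‖ with hr
  have hr0 : 0 ≤ r := le_trans (norm_nonneg y) (le_max_left _ _)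
  have hr1 : r < 1 := max_lt hy hz
  -- Summability of H
  have hsumH : Summable H := by
    have hgeo : Summable fun q : ℕ × ℕ => r ^ q.1 * r ^ q.2 :=
      Summable.mul_of_nonneg (summable_geometric_of_lt_one hr0 hr1)
        (summable_geometric_of_lt_one hr0 hr1) (fun n => pow_nonneg hr0 n)
        (fun n => pow_nonneg hr0 n)
    refine Summable.of_norm_bounded hgeo ?_
    rintro ⟨b, a⟩
    simp only [hH]
    split_ifs with hcond
    · obtain ⟨h1a, hab⟩ := hcond
      have hb1 : (1 : ℝ) ≤ (b : ℝ) := by exact_mod_cast le_trans h1a hab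
      rw [norm_div, norm_neg, norm_mul, norm_pow, norm_pow, Complex.norm_natCast]
      calc ‖y‖ ^ a * ‖z‖ ^ b / (b : ℝ) ≤ ‖y‖ ^ a * ‖z‖ ^ b := by
            apply div_le_self (mul_nonneg (pow_nonneg (norm_nonneg _) _)
              (pow_nonneg (norm_nonneg _) _)) hb1
        _ ≤ r ^ a * r ^ b :=
            mul_le_mul (pow_le_pow_left₀ (norm_nonneg _) (le_max_left _ _) a)
              (pow_le_pow_left₀ (norm_nonneg _) (le_max_right _ _) b)
              (pow_nonneg (norm_nonneg _) _) (pow_nonneg hr0 _)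
        _ = r ^ b * r ^ a := mul_comm _ _
    · simpa using mul_nonneg (pow_nonneg hr0 b) (pow_nonneg hr0 a)
  -- fiberwise sums of H
  have hfib : ∀ b : ℕ, HasSum (fun a => H (b, a)) (g b) := by
    intro b
    have h0 : ∀ a ∉ Finset.Icc 1 b, H (b, a) = 0 := by
      intro a ha
      rw [Finset.mem_Icc] at ha
      simp only [hH]
      rw [if_neg]
      tauto
    have hsum := hasSum_sum_of_ne_finset_zero (L := SummationFilter.unconditional ℕ) h0
    have hval : ∑ a ∈ Finset.Icc 1 b, H (b, a) = g b := by
      have : ∀ a ∈ Finset.Icc 1 b, H (b, a) = (-(z ^ b) / (b : ℂ)) * y ^ a := by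
        intro a ha
        rw [Finset.mem_Icc] at ha
        simp only [hH]
        rw [if_pos ⟨ha.1, ha.2⟩]
        ring
      rw [Finset.sum_congr rfl this, ← Finset.mul_sum]
      rcases Nat.eq_zero_or_pos b with rfl | hb
      · simp [hg]
      · have hgeom : ∑ a ∈ Finset.Icc 1 b, y ^ a = y * ((y ^ b - 1) / (y - 1)) := by
          rw [← geom_sum_eq hy1 b, Finset.mul_sum]
          rw [← Finset.Ico_add_one_right_eq_Icc, Finset.sum_Ico_eq_sum_range]
          apply Finset.sum_congr (by norm_num)
          intro i _
          rw [pow_add, pow_one]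
        rw [hgeom]
        simp only [hg, mul_pow]
        have hbne : (b : ℂ) ≠ 0 := Nat.cast_ne_zero.mpr hb.ne'
        have hy1c : y - 1 ≠ 0 := sub_ne_zero.mpr hy1
        field_simp
        ring
      
    rw [← hval]
    exact hsum
  -- g has sum B
  have hgB : HasSum g B := by
    have h1 := Complex.hasSum_taylorSeries_neg_log (z := y * z) hyz
    have h2 := Complex.hasSum_taylorSeries_neg_log (z := z) hz
    have h3 := (h1.sub h2).mul_left (y / (1 - y))
    rw [show B = y / (1 - y) * (-Complex.log (1 - y * z) - -Complex.log (1 - z)) by rw [hB]; ring]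
    exact h3
  -- H has sum B
  have hHB : HasSum H B := by
    have h1 : HasSum g (∑' q, H q) := HasSum.prod_fiberwise hsumH.hasSum hfib
    have h2 : (∑' q, H q) = B := h1.unique hgB
    rw [← h2]
    exact hsumH.hasSum
  -- transfer to h on T
  have hhB : HasSum h B := by
    set ι : T → ℕ × ℕ := fun q => (q.1.2, q.1.1) with hι
    have hinj : Function.Injective ι := by
      rintro ⟨⟨a, b⟩, hq⟩ ⟨⟨a', b'⟩, hq'⟩ hEq
      simp only [hι, Prod.mk.injEq] at hEq
      exact Subtype.ext (Prod.ext hEq.2 hEq.1)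
    have hvan : ∀ x ∉ Set.range ι, H x = 0 := by
      rintro ⟨b, a⟩ hx
      simp only [hH]
      rw [if_neg]
      intro hcond
      exact hx ⟨⟨(a, b), hcond.1, hcond.2⟩, rfl⟩
    have hcomp : H ∘ ι = h := by
      funext q
      obtain ⟨⟨a, b⟩, ha, hab⟩ := q
      simp only [Function.comp_apply, hι, hH, hh]
      rw [if_pos ⟨ha, hab⟩]
    rw [← hcomp] at *
    exact (hinj.hasSum_iff hvan).mpr hHB
  -- the equivalence S × N ≃ T
  set toF : S × N → T := fun pn =>
    ⟨(pn.1.1.1 * pn.2.1, pn.1.1.2 * pn.2.1),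
      mul_pos pn.1.2.1 pn.2.2, Nat.mul_le_mul_right _ pn.1.2.2.2.1⟩ with htoF
  set invF : T → S × N := fun q =>
    ⟨⟨(q.1.1 / Nat.gcd q.1.1 q.1.2, q.1.2 / Nat.gcd q.1.1 q.1.2),
       Nat.div_gcd_pos_of_pos_left _ q.2.1,
       Nat.div_gcd_pos_of_pos_right _ (lt_of_lt_of_le q.2.1 q.2.2),
       Nat.div_le_div_right q.2.2,
       Nat.coprime_div_gcd_div_gcd (Nat.gcd_pos_of_pos_left _ q.2.1)⟩,
     ⟨Nat.gcd q.1.1 q.1.2, Nat.gcd_pos_of_pos_left _ q.2.1⟩⟩ with hinvF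
  have hbij : Function.Bijective toF := by
    rw [Function.bijective_iff_has_inverse]
    refine ⟨invF, ?_, ?_⟩
    · rintro ⟨⟨⟨j, k⟩, hj, hk, hjk, hcop⟩, ⟨n, hn⟩⟩
      have hd : Nat.gcd (j * n) (k * n) = n := by
        rw [Nat.gcd_mul_right, hcop, one_mul]
      simp only [htoF, hinvF, hd]
      refine Prod.ext (Subtype.ext (Prod.ext ?_ ?_)) (Subtype.ext ?_)
      · exact Nat.mul_div_cancel j hn
      · exact Nat.mul_div_cancel k hn
      · rfl
    · rintro ⟨⟨a, b⟩, ha, hab⟩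
      simp only [htoF, hinvF]
      refine Subtype.ext (Prod.ext ?_ ?_)
      · exact Nat.div_mul_cancel (Nat.gcd_dvd_left a b)
      · exact Nat.div_mul_cancel (Nat.gcd_dvd_right a b)
  have hggB : HasSum gg B := by
    have hE : HasSum (h ∘ (Equiv.ofBijective toF hbij)) B :=
      (Equiv.ofBijective toF hbij).hasSum_iff.mpr hhB
    have hcomp2 : h ∘ (Equiv.ofBijective toF hbij) = gg := by
      funext pn
      obtain ⟨⟨⟨j, k⟩, hj, hk, hjk, hcop⟩, ⟨n, hn⟩⟩ := pn
      simp only [Function.comp_apply, Equiv.ofBijective_apply, htoF, hh, hgg]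
      push_cast
      rw [mul_pow, ← pow_mul, ← pow_mul]
    rwa [hcomp2] at hE
  -- fiberwise sums of gg
  have hfib2 : ∀ p : S, HasSum (fun n : N => gg (p, n)) (f p) := by
    rintro ⟨⟨j, k⟩, hj, hk, hjk, hcop⟩
    set w : ℂ := y ^ j * z ^ k with hw
    have hwn : ‖w‖ < 1 := hwlt j k hj hk
    have base := Complex.hasSum_taylorSeries_neg_log hwn
    have scaled := base.mul_left (-(1 / (k : ℂ)))
    have hfun : ∀ n : ℕ, (-(1 / (k : ℂ))) * (w ^ n / n) = -(w ^ n) / ((k : ℂ) * n) := by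
      intro n
      rw [neg_mul, div_mul_div_comm, one_mul, neg_div]
    have hval : (-(1 / (k : ℂ))) * (-Complex.log (1 - w)) =
        1 / (k : ℂ) * Complex.log (1 - w) := by ring
    rw [hval] at scaled
    have hfeq : (fun n : ℕ => (-(1 / (k : ℂ))) * (w ^ n / n))
        = fun n : ℕ => -(w ^ n) / ((k : ℂ) * n) := funext hfun
    rw [hfeq] at scaled
    have hvan : ∀ x ∉ Set.range (Subtype.val : N → ℕ),
        -(w ^ x) / ((k : ℂ) * x) = 0 := by
      intro x hx
      have hx0 : x = 0 := by
        by_contra hc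
        exact hx ⟨⟨x, Nat.pos_of_ne_zero hc⟩, rfl⟩
      subst hx0
      simp
    exact (Subtype.val_injective.hasSum_iff hvan).mpr scaled
  -- f has sum B
  have hfB : HasSum f B := HasSum.prod_fiberwise hggB hfib2
  -- products
  have hprod : HasProd (fun p : S => Complex.exp (f p)) (Complex.exp B) := hfB.cexp
  have hfactor : ∀ p : S,
      (1 - y ^ p.1.1 * z ^ p.1.2) ^ (1 / (p.1.2 : ℂ)) = Complex.exp (f p) := by
    rintro ⟨⟨j, k⟩, hj, hk, hjk, hcop⟩
    rw [Complex.cpow_def_of_ne_zero (hne _ (hwlt j k hj hk))]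
    simp only [hf]
    rw [mul_comm]
  -- final: exp B = RHS
  have hza : (1 : ℂ) - z ≠ 0 := hne z hz
  have hzb : (1 : ℂ) - y * z ≠ 0 := hne _ hyz
  have hq0 : (1 - z) / (1 - y * z) ≠ 0 := div_ne_zero hza hzb
  have hrepos : ∀ w : ℂ, ‖w‖ < 1 → 0 < (1 - w).re := by
    intro w hw
    have : w.re < 1 := lt_of_le_of_lt (le_trans (le_abs_self _) (Complex.abs_re_le_norm w))
      hw
    simp only [Complex.sub_re, Complex.one_re]
    linarith
  have harg1 : |Complex.arg (1 - z)| < Real.pi / 2 :=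
    Complex.abs_arg_lt_pi_div_two_iff.mpr (Or.inl (hrepos z hz))
  have harg2 : |Complex.arg (1 - y * z)| < Real.pi / 2 :=
    Complex.abs_arg_lt_pi_div_two_iff.mpr (Or.inl (hrepos _ hyz))
  have hlogdiv : Complex.log ((1 - z) / (1 - y * z))
      = Complex.log (1 - z) - Complex.log (1 - y * z) := by
    have hexp : Complex.exp (Complex.log (1 - z) - Complex.log (1 - y * z))
        = (1 - z) / (1 - y * z) := by
      rw [Complex.exp_sub, Complex.exp_log hza, Complex.exp_log hzb]
    rw [← hexp]
    have him : (Complex.log (1 - z) - Complex.log (1 - y * z)).im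
        = Complex.arg (1 - z) - Complex.arg (1 - y * z) := by
      simp [Complex.sub_im, Complex.log_im]
    rw [abs_lt] at harg1 harg2
    apply Complex.log_exp
    · rw [him]; linarith
    · rw [him]; linarith [Real.pi_pos]
  have hrhs : ((1 - z) / (1 - y * z)) ^ (y / (1 - y)) = Complex.exp B := by
    rw [Complex.cpow_def_of_ne_zero hq0, hlogdiv, hB]
    ring_nf
  rw [hrhs, tprod_congr hfactor]
  exact hprod.tprod_eq
end

section
/- Let z ∈ ℂ with |z| < 1. Then the infinite product over all positive integers k of (1 − z^k)^(φ(k)/k) equals exp(z/(z − 1)), where φ is Euler's totient function. -/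
open Complex

private noncomputable def Gfun (z : ℂ) : ℕ × ℕ → ℂ :=
  fun p => -(Nat.totient p.1 : ℂ) * z ^ (p.1 * p.2) / ((p.1 * p.2 : ℕ) : ℂ)

private noncomputable def ffun (z : ℂ) : ℕ → ℂ :=
  fun k => ((Nat.totient k : ℂ) / (k : ℂ)) * Complex.log (1 - z ^ k)

private lemma Gfun_summable (z : ℂ) (hz : ‖z‖ < 1) : Summable (Gfun z) := by
  set s := Real.sqrt ‖z‖ with hs
  have hs0 : 0 ≤ s := Real.sqrt_nonneg _
  have hs1 : s < 1 := by
    rw [hs, show (1:ℝ) = Real.sqrt 1 by simp]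
    exact Real.sqrt_lt_sqrt (norm_nonneg z) hz
  have hss : s * s = ‖z‖ := Real.mul_self_sqrt (norm_nonneg z)
  have hmaj : Summable fun p : ℕ × ℕ => s ^ p.1 * s ^ p.2 :=
    (summable_geometric_of_lt_one hs0 hs1).mul_of_nonneg
      (summable_geometric_of_lt_one hs0 hs1)
      (fun n => pow_nonneg hs0 n) (fun n => pow_nonneg hs0 n)
  refine Summable.of_norm (hmaj.of_nonneg_of_le (fun p => norm_nonneg _) ?_)
  rintro ⟨k, n⟩
  rcases eq_or_ne k 0 with rfl | hk
  · simp [Gfun]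
    positivity
  rcases eq_or_ne n 0 with rfl | hn
  · simp [Gfun]
    positivity
  have hk1 : 1 ≤ k := Nat.one_le_iff_ne_zero.mpr hk
  have hn1 : 1 ≤ n := Nat.one_le_iff_ne_zero.mpr hn
  simp only [Gfun, norm_div, norm_mul, norm_neg, norm_pow, norm_natCast]
  have h1 : (Nat.totient k : ℝ) / (k * n : ℕ) ≤ 1 := by
    rw [div_le_one (by positivity)]
    exact_mod_cast le_trans (Nat.totient_le k) (Nat.le_mul_of_pos_right k hn1)
  have h2 : ‖z‖ ^ (k * n) ≤ s ^ k * s ^ n := by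
    have : ‖z‖ ^ (k * n) = s ^ (k * n) * s ^ (k * n) := by
      rw [← mul_pow, hss]
    rw [this]
    exact mul_le_mul (pow_le_pow_of_le_one hs0 hs1.le (Nat.le_mul_of_pos_right k hn1))
      (pow_le_pow_of_le_one hs0 hs1.le (Nat.le_mul_of_pos_left n hk1))
      (by positivity) (by positivity)
  calc (Nat.totient k : ℝ) * ‖z‖ ^ (k * n) / (k * n : ℕ)
      = ((Nat.totient k : ℝ) / (k * n : ℕ)) * ‖z‖ ^ (k * n) := by ring
    _ ≤ 1 * (s ^ k * s ^ n) := by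
        apply mul_le_mul h1 h2 (by positivity) one_pos.le
    _ = s ^ k * s ^ n := one_mul _

private lemma Gfun_fiber (z : ℂ) (m : ℕ) :
    (∑' p : (fun p : ℕ × ℕ => p.1 * p.2) ⁻¹' {m}, Gfun z p)
      = if m = 0 then 0 else -z ^ m := by
  rcases eq_or_ne m 0 with rfl | hm
  · rw [if_pos rfl]
    refine (tsum_congr ?_).trans tsum_zero
    rintro ⟨⟨k, n⟩, hp⟩
    simp only [Set.mem_preimage, Set.mem_singleton_iff] at hp
    rcases Nat.mul_eq_zero.mp hp with rfl | rfl
    · simp [Gfun]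
    · simp [Gfun]
  · rw [if_neg hm]
    rw [show (fun p : ℕ × ℕ => p.1 * p.2) ⁻¹' {m} = ↑m.divisorsAntidiagonal by
      ext p; simp [Nat.mem_divisorsAntidiagonal, hm]]
    rw [Finset.tsum_subtype' m.divisorsAntidiagonal (Gfun z)]
    have hmc : ((m : ℕ) : ℂ) ≠ 0 := Nat.cast_ne_zero.mpr hm
    calc ∑ p ∈ m.divisorsAntidiagonal, Gfun z p
        = ∑ p ∈ m.divisorsAntidiagonal, (Nat.totient p.1 : ℂ) * (-z ^ m / m) := by
          refine Finset.sum_congr rfl fun p hp => ?_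
          rw [Nat.mem_divisorsAntidiagonal] at hp
          simp only [Gfun, hp.1]
          ring
      _ = (↑(∑ d ∈ m.divisors, Nat.totient d) : ℂ) * (-z ^ m / m) := by
          rw [Nat.sum_divisorsAntidiagonal (fun i _ => (Nat.totient i : ℂ) * (-z ^ m / m)),
            ← Finset.sum_mul, Nat.cast_sum]
      _ = -z ^ m := by
          rw [Nat.sum_totient]
          field_simp

theorem stmt_5 (z : ℂ) (hz : ‖z‖ < 1) :
    (∏' k : ℕ+, (1 - z ^ (k : ℕ)) ^ ((Nat.totient (k : ℕ) : ℂ) / ((k : ℕ) : ℂ))) =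
    Complex.exp (z / (z - 1)) := by
  have hzk : ∀ k : ℕ, k ≠ 0 → ‖z ^ k‖ < 1 := fun k hk => by
    rw [norm_pow]; exact pow_lt_one₀ (norm_nonneg z) hz hk
  have hne : ∀ k : ℕ, k ≠ 0 → (1 : ℂ) - z ^ k ≠ 0 := by
    intro k hk h
    have h1 : z ^ k = 1 := by linear_combination -h
    have h2 := hzk k hk
    rw [h1, norm_one] at h2
    exact lt_irrefl _ h2
  have hz1 : (1 : ℂ) - z ≠ 0 := by
    intro h
    have h1 : z = 1 := by linear_combination -h
    rw [h1, norm_one] at hz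
    exact lt_irrefl _ hz
  -- Step 1: fiberwise sums over the second coordinate
  have hfib : ∀ k : ℕ, HasSum (fun n => Gfun z (k, n)) (ffun z k) := by
    intro k
    rcases eq_or_ne k 0 with rfl | hk
    · have h0 : (fun n => Gfun z (0, n)) = fun _ => (0 : ℂ) := by
        funext n; simp [Gfun]
      have hf0 : ffun z 0 = 0 := by simp [ffun]
      rw [h0, hf0]; exact hasSum_zero
    · have H := (Complex.hasSum_taylorSeries_neg_log (hzk k hk)).mul_left
        (-(Nat.totient k : ℂ) / (k : ℂ))
      have hval : -(Nat.totient k : ℂ) / (k : ℂ) * -Complex.log (1 - z ^ k) = ffun z k := by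
        simp only [ffun]; ring
      rw [hval] at H
      refine H.congr_fun fun n => ?_
      simp only [Gfun]
      rw [div_mul_div_comm, ← pow_mul]
      push_cast
      ring
  -- Step 2: summability
  have hGsum := Gfun_summable z hz
  -- Step 3: total sum equals z / (z - 1)
  have htarget : HasSum (fun m : ℕ => if m = 0 then 0 else -z ^ m) (z / (z - 1)) := by
    have h1 := (hasSum_geometric_of_norm_lt_one hz).neg
    have h2 := hasSum_ite_eq (0 : ℕ) (1 : ℂ)
    have h3 := h1.add h2
    have hfun : (fun m : ℕ => -z ^ m + (if m = 0 then (1 : ℂ) else 0))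
        = fun m : ℕ => if m = 0 then 0 else -z ^ m := by
      funext m
      rcases eq_or_ne m 0 with rfl | hm
      · simp
      · simp [hm]
    rw [hfun] at h3
    have hval : -(1 - z)⁻¹ + 1 = z / (z - 1) := by
      have hz1' : z - 1 ≠ 0 := fun h => hz1 (by linear_combination -h)
      field_simp
      ring
    rwa [hval] at h3
  have hfiber := hGsum.hasSum.tsum_fiberwise (fun p => p.1 * p.2)
  have hfiber' : HasSum (fun m : ℕ => if m = 0 then 0 else -z ^ m) (∑' p, Gfun z p) := by
    refine hfiber.congr_fun fun m => (Gfun_fiber z m).symm ▸ rfl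
  have htot : (∑' p, Gfun z p) = z / (z - 1) := hfiber'.unique htarget
  have hG : HasSum (Gfun z) (z / (z - 1)) := htot ▸ hGsum.hasSum
  -- Step 4: sum over first coordinate
  have hf : HasSum (ffun z) (z / (z - 1)) := hG.prod_fiberwise hfib
  -- Step 5: restrict to ℕ+
  have hfp : HasSum (fun k : ℕ+ => ffun z (k : ℕ)) (z / (z - 1)) := by
    refine (Function.Injective.hasSum_iff (f := ffun z)
      (g := fun k : ℕ+ => (k : ℕ)) (fun a b h => PNat.coe_injective h) ?_).mpr hf
    intro x hx
    have hx0 : x = 0 := by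
      by_contra h
      exact hx ⟨⟨x, Nat.pos_of_ne_zero h⟩, rfl⟩
    simp [hx0, ffun]
  -- Step 6: exponentiate
  have hprod := hfp.cexp
  have hfact : (fun k : ℕ+ => Complex.exp (ffun z (k : ℕ)))
      = fun k : ℕ+ => (1 - z ^ (k : ℕ)) ^ ((Nat.totient (k : ℕ) : ℂ) / ((k : ℕ) : ℂ)) := by
    funext k
    rw [Complex.cpow_def_of_ne_zero (hne (k : ℕ) k.pos.ne'), ffun, mul_comm]
  have : HasProd (fun k : ℕ+ => (1 - z ^ (k : ℕ)) ^ ((Nat.totient (k : ℕ) : ℂ) / ((k : ℕ) : ℂ)))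
      (Complex.exp (z / (z - 1))) := hfact ▸ hprod
  exact this.tprod_eq
end

section
/- Define f : ℂ → ℂ by f(z) = exp(z/(z − 1)) (so f is analytic on the open unit disc), and let α(n) denote the n-th iterated derivative of f at 0. Then α(0) = 1, α(1) = −1, and for every integer n ≥ 2 the recurrence α(n) + (n − 1)(n − 2)·α(n − 2) = (2n − 3)·α(n − 1) holds. -/
open Complex Set Filter Topology

private lemma iteratedDerivWithin_of_isOpen'' {n : ℕ} {f : ℂ → ℂ} {s : Set ℂ}
    (hs : IsOpen s) {x : ℂ} (hx : x ∈ s) :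
    iteratedDerivWithin n f s x = iteratedDeriv n f x := by
  simp only [iteratedDerivWithin, iteratedDeriv, iteratedFDerivWithin_of_isOpen n hs hx]

private lemma shift_aux (k : ℕ) (h : ℂ → ℂ) (y : ℂ) :
    (k : ℂ) * iteratedDeriv (k - 1) (deriv h) y = (k : ℂ) * iteratedDeriv k h y := by
  cases k with
  | zero => simp
  | succ m => rw [Nat.add_sub_cancel, ← iteratedDeriv_succ']

private lemma key_mul {s : Set ℂ} (hs : IsOpen s) (n : ℕ) :
    ∀ (g : ℂ → ℂ), AnalyticOnNhd ℂ g s → ∀ x ∈ s,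
      iteratedDeriv n (fun z => (z - 1) * g z) x
        = (x - 1) * iteratedDeriv n g x + (n : ℂ) * iteratedDeriv (n - 1) g x := by
  induction n with
  | zero => intro g hg x hx; simp
  | succ n IH =>
    intro g hg x hx
    have hg' : AnalyticOnNhd ℂ (deriv g) s := hg.deriv
    have hgd : ∀ y ∈ s, DifferentiableAt ℂ g y := fun y hy => (hg y hy).differentiableAt
    have heq : Set.EqOn (deriv fun z => (z - 1) * g z)
        ((fun z => g z) + fun z => (z - 1) * deriv g z) s := by
      intro y hy
      have h1 : DifferentiableAt ℂ (fun z : ℂ => z - 1) y := by fun_prop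
      rw [deriv_fun_mul h1 (hgd y hy)]
      have : deriv (fun z : ℂ => z - 1) y = 1 := by
        rw [deriv_fun_sub differentiableAt_fun_id (differentiableAt_const _)]; simp
      simp only [this, Pi.add_apply]
      ring
    rw [iteratedDeriv_succ',
      heq.iteratedDeriv_of_isOpen hs n hx]
    have hmul : AnalyticOnNhd ℂ (fun z : ℂ => (z - 1) * deriv g z) s :=
      ((analyticOnNhd_id.sub analyticOnNhd_const).mul hg')
    have hadd : iteratedDeriv n ((fun z => g z) + fun z => (z - 1) * deriv g z) x
        = iteratedDeriv n (fun z => g z) x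
          + iteratedDeriv n (fun z => (z - 1) * deriv g z) x := by
      rw [← iteratedDerivWithin_of_isOpen'' hs hx, ← iteratedDerivWithin_of_isOpen'' hs hx,
        ← iteratedDerivWithin_of_isOpen'' hs hx]
      exact iteratedDerivWithin_add hx hs.uniqueDiffOn
        ((hg.contDiffOn hs.uniqueDiffOn).contDiffWithinAt hx) ((hmul.contDiffOn hs.uniqueDiffOn).contDiffWithinAt hx)
    rw [hadd, IH (deriv g) hg' x hx]
    rw [Nat.add_sub_cancel, ← iteratedDeriv_succ']
    have hsh := shift_aux n g x
    push_cast
    linear_combination hsh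

theorem stmt_7 (α : ℕ → ℂ)
    (hα : ∀ n, α n = iteratedDeriv n (fun z : ℂ => Complex.exp (z / (z - 1))) 0) :
    α 0 = 1 ∧ α 1 = -1 ∧ ∀ n : ℕ, 2 ≤ n →
      α n + ((n : ℂ) - 1) * ((n : ℂ) - 2) * α (n - 2) = (2 * (n : ℂ) - 3) * α (n - 1) := by
  set f : ℂ → ℂ := fun z : ℂ => Complex.exp (z / (z - 1)) with hfdef
  set s : Set ℂ := {(1 : ℂ)}ᶜ with hsdef
  have hs : IsOpen s := isOpen_compl_singleton
  have h0 : (0 : ℂ) ∈ s := by simp [hsdef]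
  have hu : AnalyticOnNhd ℂ (fun z : ℂ => z / (z - 1)) s := by
    apply analyticOnNhd_id.div (analyticOnNhd_id.sub analyticOnNhd_const)
    intro z hz
    exact sub_ne_zero.2 (by simpa [hsdef] using hz)
  have hf : AnalyticOnNhd ℂ f s := hu.cexp
  have hderiv : ∀ z ∈ s, deriv f z = f z * (-(1 / (z - 1) ^ 2)) := by
    intro z hz
    have hz1 : z - 1 ≠ 0 := sub_ne_zero.2 (by simpa [hsdef] using hz)
    have h2 : HasDerivAt (fun w : ℂ => w - 1) 1 z := (hasDerivAt_id z).sub_const 1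
    have h3 : HasDerivAt (fun w : ℂ => w / (w - 1)) (-(1 / (z - 1) ^ 2)) z := by
      have := (hasDerivAt_id z).div h2 hz1
      exact this.congr_deriv (by simp only [id]; ring)
    exact h3.cexp.deriv
  have hODE : Set.EqOn (fun z => (z - 1) * ((z - 1) * deriv f z)) (fun z => -(f z)) s := by
    intro z hz
    have hz1 : z - 1 ≠ 0 := sub_ne_zero.2 (by simpa [hsdef] using hz)
    simp only [hderiv z hz]
    field_simp
  have hα0 : α 0 = 1 := by
    rw [hα 0, iteratedDeriv_zero]; simp [hfdef]
  have hα1 : α 1 = -1 := by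
    rw [hα 1, iteratedDeriv_one, hderiv 0 h0]
    norm_num [hfdef, Complex.exp_zero]
  refine ⟨hα0, hα1, ?_⟩
  intro n hn
  obtain ⟨k, rfl⟩ : ∃ k, n = k + 2 := ⟨n - 2, by omega⟩
  have hg : AnalyticOnNhd ℂ (deriv f) s := hf.deriv
  have hg1 : AnalyticOnNhd ℂ (fun z : ℂ => (z - 1) * deriv f z) s :=
    (analyticOnNhd_id.sub analyticOnNhd_const).mul hg
  -- iterated derivative of the ODE at 0, order k+1
  have main : iteratedDeriv (k + 1) (fun z => (z - 1) * ((z - 1) * deriv f z)) 0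
      = iteratedDeriv (k + 1) (fun z => -(f z)) 0 :=
    hODE.iteratedDeriv_of_isOpen hs (k + 1) h0
  rw [key_mul hs (k + 1) _ hg1 0 h0] at main
  rw [Nat.add_sub_cancel] at main
  rw [key_mul hs (k + 1) _ hg 0 h0, key_mul hs k _ hg 0 h0] at main
  rw [Nat.add_sub_cancel] at main
  rw [iteratedDeriv_fun_neg] at main
  have e1 : iteratedDeriv (k + 1 + 1) f 0 = iteratedDeriv (k + 1) (deriv f) 0 := by
    rw [iteratedDeriv_succ']
  have e2 : iteratedDeriv (k + 1) f 0 = iteratedDeriv k (deriv f) 0 := by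
    rw [iteratedDeriv_succ']
  have e5 : (k : ℂ) * iteratedDeriv (k - 1) (deriv f) 0 = (k : ℂ) * iteratedDeriv k f 0 :=
    shift_aux k f 0
  rw [show k + 2 - 2 = k from rfl, show k + 2 - 1 = k + 1 from rfl,
    hα k, hα (k + 1), hα (k + 2)]
  push_cast at main ⊢
  linear_combination main + e1 - 2 * ((k : ℂ) + 1) * e2 - ((k : ℂ) + 1) * e5
end

section
/- Fix y ∈ ℂ with |y| < 1, and define g(z) = ((1 − yz)/(1 − z))^(1/(1 − y)) for |z| < 1, using the principal-branch complex power; g is analytic near 0. Let c(n) = g^(n)(0)/n! be its Taylor coefficients at 0. Then c(0) = 1, c(1) = 1, and for every integer n ≥ 0 one has n·y·c(n) + (n + 2)·c(n + 2) = (2 + n + y + n·y)·c(n + 1). -/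
open Complex Topology Filter Set

private lemma itDW_eq {f : ℂ → ℂ} {s : Set ℂ} {x : ℂ} (hs : IsOpen s) (hx : x ∈ s) (n : ℕ) :
    iteratedDerivWithin n f s x = iteratedDeriv n f x := by
  simp [iteratedDerivWithin, iteratedDeriv, iteratedFDerivWithin_of_isOpen n hs hx]

private lemma an_deriv {f : ℂ → ℂ} {x : ℂ} (hf : AnalyticAt ℂ f x) :
    AnalyticAt ℂ (deriv f) x := by
  have h : AnalyticOnNhd ℂ f {x} := by
    intro y hy; rw [Set.mem_singleton_iff] at hy; exact hy ▸ hf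
  exact h.deriv x rfl

private lemma itD_add {f g : ℂ → ℂ} {x : ℂ} (hf : AnalyticAt ℂ f x) (hg : AnalyticAt ℂ g x)
    (m : ℕ) :
    iteratedDeriv m (fun z => f z + g z) x = iteratedDeriv m f x + iteratedDeriv m g x := by
  obtain ⟨U, hUsub, hUo, hxU⟩ :=
    mem_nhds_iff.mp (hf.eventually_analyticAt.and hg.eventually_analyticAt)
  have hfc : ContDiffOn ℂ m f U := fun z hz => ((hUsub hz).1.contDiffAt).contDiffWithinAt
  have hgc : ContDiffOn ℂ m g U := fun z hz => ((hUsub hz).2.contDiffAt).contDiffWithinAt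
  rw [← itDW_eq hUo hxU m (f := fun z => f z + g z), ← itDW_eq hUo hxU m (f := f),
    ← itDW_eq hUo hxU m (f := g)]
  exact iteratedDerivWithin_add hxU hUo.uniqueDiffOn (hfc x hxU) (hgc x hxU)

private lemma itD_cmul {f : ℂ → ℂ} {x : ℂ} (hf : AnalyticAt ℂ f x) (a : ℂ) (m : ℕ) :
    iteratedDeriv m (fun z => a * f z) x = a * iteratedDeriv m f x := by
  obtain ⟨U, hUsub, hUo, hxU⟩ := mem_nhds_iff.mp hf.eventually_analyticAt
  have hfc : ContDiffOn ℂ m f U := fun z hz => ((hUsub hz).contDiffAt).contDiffWithinAt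
  rw [← itDW_eq hUo hxU m (f := fun z => a * f z), ← itDW_eq hUo hxU m (f := f)]
  exact iteratedDerivWithin_const_mul hxU hUo.uniqueDiffOn a (hfc x hxU)

private lemma itD_zmul {f : ℂ → ℂ} (hf : AnalyticAt ℂ f 0) (m : ℕ) :
    iteratedDeriv (m + 1) (fun z => z * f z) 0 = ((m : ℂ) + 1) * iteratedDeriv m f 0 := by
  induction m generalizing f with
  | zero =>
    have h : HasDerivAt (fun z : ℂ => z * f z) (1 * f 0 + 0 * deriv f 0) 0 :=
      (hasDerivAt_id 0).mul hf.differentiableAt.hasDerivAt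
    rw [iteratedDeriv_one, h.deriv]
    simp
  | succ k ih =>
    have h1 : deriv (fun z : ℂ => z * f z) =ᶠ[𝓝 0] fun z => f z + z * deriv f z := by
      filter_upwards [hf.eventually_analyticAt] with z hz
      have := ((hasDerivAt_id z).mul hz.differentiableAt.hasDerivAt).deriv
      exact this.trans (by simp)
    rw [iteratedDeriv_succ', h1.iteratedDeriv_eq (k + 1),
      itD_add hf (show AnalyticAt ℂ (fun z => z * deriv f z) 0 from
        analyticAt_id.mul (an_deriv hf)) (k + 1),
      ih (an_deriv hf), ← iteratedDeriv_succ']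
    push_cast
    ring

theorem stmt_8 (y : ℂ) (hy : ‖y‖ < 1) (c : ℕ → ℂ)
    (hc : ∀ n, c n =
      iteratedDeriv n (fun z : ℂ => ((1 - y * z) / (1 - z)) ^ (1 / (1 - y))) 0 / n.factorial) :
    c 0 = 1 ∧ c 1 = 1 ∧ ∀ n : ℕ,
      (n : ℂ) * y * c n + ((n : ℂ) + 2) * c (n + 2) =
        (2 + (n : ℂ) + y + (n : ℂ) * y) * c (n + 1) := by
  set s : ℂ := 1 / (1 - y) with hs
  set g : ℂ → ℂ := fun z : ℂ => ((1 - y * z) / (1 - z)) ^ s with hg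
  have hy1 : (1 : ℂ) - y ≠ 0 := by
    intro h
    have h' : (1 : ℂ) = y := by linear_combination h
    rw [← h'] at hy
    simp at hy
  set U : Set ℂ := {z : ℂ | 1 - z ≠ 0 ∧ 1 - y * z ≠ 0 ∧ (1 - y * z) / (1 - z) ∈ slitPlane}
    with hU
  have hVo : IsOpen {z : ℂ | 1 - z ≠ 0 ∧ 1 - y * z ≠ 0} := by
    have h1 : IsOpen {z : ℂ | 1 - z ≠ 0} :=
      isOpen_compl_singleton.preimage (continuous_const.sub continuous_id)
    have h2 : IsOpen {z : ℂ | 1 - y * z ≠ 0} :=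
      isOpen_compl_singleton.preimage (continuous_const.sub (continuous_const.mul continuous_id))
    exact h1.inter h2
  have hUo : IsOpen U := by
    have hq : ContinuousOn (fun z : ℂ => (1 - y * z) / (1 - z))
        {z : ℂ | 1 - z ≠ 0 ∧ 1 - y * z ≠ 0} :=
      ((continuous_const.sub (continuous_const.mul continuous_id)).continuousOn).div
        ((continuous_const.sub continuous_id).continuousOn) (fun z hz => hz.1)
    have h := hq.isOpen_inter_preimage hVo isOpen_slitPlane
    convert h using 1
    ext z
    simp only [hU, Set.mem_setOf_eq, Set.mem_inter_iff, Set.mem_preimage]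
    tauto
  have h0U : (0 : ℂ) ∈ U := by
    refine ⟨by norm_num, by norm_num, ?_⟩
    norm_num [Complex.one_mem_slitPlane]
  have hga : ∀ z ∈ U, AnalyticAt ℂ g z := by
    intro z hz
    exact ((analyticAt_const.sub (analyticAt_const.mul analyticAt_id)).div
      (analyticAt_const.sub analyticAt_id) hz.1).cpow analyticAt_const hz.2.2
  have hg0 : AnalyticAt ℂ g 0 := hga 0 h0U
  have hD : ∀ z ∈ U, HasDerivAt g
      (s * ((1 - y * z) / (1 - z)) ^ (s - 1) *
        ((-y * (1 - z) - (1 - y * z) * (-1)) / (1 - z) ^ 2)) z := by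
    intro z hz
    have h1 : HasDerivAt (fun z : ℂ => 1 - y * z) (-y) z := by
      exact ((hasDerivAt_const z (1 : ℂ)).sub ((hasDerivAt_id z).const_mul y)).congr_deriv (by simp)
    have h2 : HasDerivAt (fun z : ℂ => 1 - z) (-1) z := by
      exact ((hasDerivAt_const z (1 : ℂ)).sub (hasDerivAt_id z)).congr_deriv (by simp)
    exact (h1.div h2 hz.1).cpow_const hz.2.2
  have hkey : ∀ z ∈ U, g z =
      deriv g z + (-(1 + y)) * (z * deriv g z) + y * (z * (z * deriv g z)) := by
    intro z hz
    have hd := (hD z hz).deriv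
    have hz1 : (1 : ℂ) - z ≠ 0 := hz.1
    have hb0 : (1 - y * z) / (1 - z) ≠ 0 := slitPlane_ne_zero hz.2.2
    have key : deriv g z * ((1 - z) * (1 - y * z)) = g z := by
      rw [hd]
      have hA : (-y * (1 - z) - (1 - y * z) * (-1)) / (1 - z) ^ 2 * ((1 - z) * (1 - y * z))
          = (1 - y) * ((1 - y * z) / (1 - z)) := by
        field_simp [hz1]
        ring
      calc s * ((1 - y * z) / (1 - z)) ^ (s - 1) *
            ((-y * (1 - z) - (1 - y * z) * (-1)) / (1 - z) ^ 2) * ((1 - z) * (1 - y * z))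
          = (s * (1 - y)) * (((1 - y * z) / (1 - z)) ^ (s - 1) * ((1 - y * z) / (1 - z))) := by
            rw [mul_assoc (s * ((1 - y * z) / (1 - z)) ^ (s - 1)), hA]; ring
        _ = ((1 - y * z) / (1 - z)) ^ (s - 1) * ((1 - y * z) / (1 - z)) := by
            rw [hs]; field_simp
        _ = g z := by
            rw [hg]
            simp only []
            rw [cpow_sub _ _ hb0, cpow_one, div_mul_cancel₀ _ hb0]
    rw [← key]
    ring
  have hevt : g =ᶠ[𝓝 0]
      fun z => deriv g z + (-(1 + y)) * (z * deriv g z) + y * (z * (z * deriv g z)) := by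
    filter_upwards [hUo.mem_nhds h0U] with z hz
    exact hkey z hz
  have a1 : AnalyticAt ℂ (deriv g) 0 := an_deriv hg0
  have a2 : AnalyticAt ℂ (fun z : ℂ => z * deriv g z) 0 := analyticAt_id.mul a1
  have a3 : AnalyticAt ℂ (fun z : ℂ => z * (z * deriv g z)) 0 := analyticAt_id.mul a2
  have hT : ∀ n : ℕ, iteratedDeriv n (fun z : ℂ => z * deriv g z) 0
      = (n : ℂ) * iteratedDeriv n g 0 := by
    intro n
    match n with
    | 0 => simp
    | (m + 1) =>
      rw [itD_zmul a1 m, ← iteratedDeriv_succ']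
      push_cast; ring
  have hrec : ∀ n : ℕ, iteratedDeriv (n + 1) g 0 =
      iteratedDeriv (n + 2) g 0
        + (-(1 + y)) * (((n : ℂ) + 1) * iteratedDeriv (n + 1) g 0)
        + y * (((n : ℂ) + 1) * ((n : ℂ) * iteratedDeriv n g 0)) := by
    intro n
    have e := hevt.iteratedDeriv_eq (n + 1)
    rw [itD_add (show AnalyticAt ℂ
        (fun z : ℂ => deriv g z + -(1 + y) * (z * deriv g z)) 0 from
        a1.add (show AnalyticAt ℂ (fun z : ℂ => -(1 + y) * (z * deriv g z)) 0 from
          analyticAt_const.mul a2))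
        (show AnalyticAt ℂ (fun z : ℂ => y * (z * (z * deriv g z))) 0 from
          analyticAt_const.mul a3) (n + 1),
      itD_add a1 (show AnalyticAt ℂ (fun z : ℂ => -(1 + y) * (z * deriv g z)) 0 from
        analyticAt_const.mul a2) (n + 1),
      itD_cmul a2 (-(1 + y)), itD_cmul a3 y, itD_zmul a2 n, hT n, hT (n + 1),
      ← iteratedDeriv_succ', show n + 1 + 1 = n + 2 by omega] at e
    push_cast at e ⊢
    linear_combination e
  refine ⟨?_, ?_, ?_⟩
  · rw [hc 0]
    have : g 0 = 1 := by
      rw [hg]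
      norm_num
    simp [this]
  · rw [hc 1]
    have h1 := (hD 0 h0U).deriv
    norm_num at h1
    have hone : deriv g 0 = 1 := by
      rw [h1, hs]
      field_simp
      ring
    simp [iteratedDeriv_one, hone]
  · intro n
    have hfac1 : (((n + 1).factorial : ℕ) : ℂ) = ((n : ℂ) + 1) * (n.factorial : ℂ) := by
      push_cast [Nat.factorial_succ]; ring
    have hfac2 : (((n + 2).factorial : ℕ) : ℂ)
        = ((n : ℂ) + 2) * (((n : ℂ) + 1) * (n.factorial : ℂ)) := by
      push_cast [Nat.factorial_succ]; ring
    have hne : ((n.factorial : ℕ) : ℂ) ≠ 0 := Nat.cast_ne_zero.mpr n.factorial_ne_zero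
    have hne1 : ((n : ℂ) + 1) ≠ 0 := by
      have : ((n + 1 : ℕ) : ℂ) ≠ 0 := Nat.cast_ne_zero.mpr (by omega)
      push_cast at this; exact this
    have hne2 : ((n : ℂ) + 2) ≠ 0 := by
      have : ((n + 2 : ℕ) : ℂ) ≠ 0 := Nat.cast_ne_zero.mpr (by omega)
      push_cast at this; exact this
    have e0 : iteratedDeriv n g 0 = c n * (n.factorial : ℂ) := by
      rw [hc n]; field_simp
    have e1 : iteratedDeriv (n + 1) g 0 = c (n + 1) * (((n : ℂ) + 1) * (n.factorial : ℂ)) := by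
      rw [hc (n + 1), hfac1]; field_simp
    have e2 : iteratedDeriv (n + 2) g 0
        = c (n + 2) * (((n : ℂ) + 2) * (((n : ℂ) + 1) * (n.factorial : ℂ))) := by
      rw [hc (n + 2), hfac2]; field_simp
    have hr := hrec n
    rw [e0, e1, e2] at hr
    have hcan : c (n + 1) * (((n : ℂ) + 1) * (n.factorial : ℂ))
        = (((n : ℂ) + 2) * c (n + 2) - (1 + y) * (((n : ℂ) + 1) * c (n + 1))
            + y * ((n : ℂ) * c n)) * (((n : ℂ) + 1) * (n.factorial : ℂ)) := by
      linear_combination hr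
    have hfin := mul_right_cancel₀ (mul_ne_zero hne1 hne) hcan
    linear_combination (-1 : ℂ) * hfin
end

section
/- Let N ≥ 2 be an integer, let x_1, …, x_N ∈ ℂ with |x_i| < 1 for all i, and let b_1, …, b_N ∈ ℂ with b_1 + ⋯ + b_N = 1. Then the infinite product over all N-tuples of positive integers (a_1, …, a_N) with a_i ≤ a_N for every i < N and gcd(a_1, …, a_N) = 1 of (1/(1 − x_1^{a_1} x_2^{a_2} ⋯ x_N^{a_N}))^( 1/(a_1^{b_1} a_2^{b_2} ⋯ a_N^{b_N}) ) equals exp( Σ_{k=1}^∞ ( ∏_{i=1}^{N−1} Σ_{j=1}^{k} x_i^j / j^{b_i} ) · x_N^k / k^{b_N} ). -/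
open Finset Complex

namespace VPVaux

variable {M : ℕ} (x b : Fin (M+1) → ℂ)

/-- The general term of the logarithmic sum, over raw lattice points. -/
noncomputable def F (a : Fin (M+1) → ℕ) : ℂ := ∏ i, (x i ^ a i / (a i : ℂ) ^ b i)

/-- Norm of one factor. -/
noncomputable def ht (i : Fin (M+1)) (n : ℕ) : ℝ := ‖x i‖ ^ n * (n : ℝ) ^ (-(b i).re)

lemma ht_nonneg (i : Fin (M+1)) (n : ℕ) : 0 ≤ ht x b i n := by
  unfold ht; positivity

lemma norm_factor (i : Fin (M+1)) {n : ℕ} (hn : 0 < n) :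
    ‖x i ^ n / (n : ℂ) ^ b i‖ = ht x b i n := by
  rw [norm_div, norm_pow, norm_natCast_cpow_of_pos hn, ht,
    Real.rpow_neg (Nat.cast_nonneg n), div_eq_mul_inv]

lemma norm_F {a : Fin (M+1) → ℕ} (ha : ∀ i, 0 < a i) :
    ‖F x b a‖ = ∏ i, ht x b i (a i) := by
  rw [F, norm_prod]
  exact Finset.prod_congr rfl fun i _ => norm_factor x b i (ha i)

lemma summable_ht_succ (hx : ∀ i, ‖x i‖ < 1) (i : Fin (M+1)) :
    Summable fun n : ℕ => ht x b i (n+1) := by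
  set c : ℝ := -(b i).re
  set K : ℕ := ⌈max c 0⌉₊
  have hc : c ≤ (K : ℝ) := le_trans (le_max_left _ _) (Nat.le_ceil _)
  have hsum : Summable fun n : ℕ => (n : ℝ) ^ K * ‖x i‖ ^ n := by
    have := summable_pow_mul_geometric_of_norm_lt_one (R := ℝ) K
      (r := ‖x i‖) (by simpa using hx i)
    simpa using this
  refine Summable.of_nonneg_of_le (fun n => ht_nonneg x b i (n+1))
    (fun n => ?_) ((summable_nat_add_iff 1).2 hsum)
  have h1 : (1:ℝ) ≤ ((n+1 : ℕ) : ℝ) := by exact_mod_cast Nat.succ_le_succ (Nat.zero_le n)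
  have : ((n+1 : ℕ) : ℝ) ^ c ≤ ((n+1 : ℕ) : ℝ) ^ (K:ℝ) :=
    Real.rpow_le_rpow_of_exponent_le h1 hc
  rw [Real.rpow_natCast] at this
  calc ht x b i (n+1) = ((n+1:ℕ):ℝ) ^ c * ‖x i‖ ^ (n+1) := by rw [ht]; ring
    _ ≤ ((n+1:ℕ):ℝ) ^ K * ‖x i‖ ^ (n+1) := by
        apply mul_le_mul_of_nonneg_right this (by positivity)

lemma summable_ht_pnat (hx : ∀ i, ‖x i‖ < 1) (i : Fin (M+1)) :
    Summable fun n : ℕ+ => ht x b i n := by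
  rw [← Equiv.pnatEquivNat.symm.summable_iff]
  refine (summable_ht_succ x b hx i).congr fun n => ?_
  simp [Equiv.pnatEquivNat]

noncomputable def C (i : Fin (M+1)) : ℝ := ∑' n : ℕ, ht x b i (n+1)

lemma C_nonneg (i : Fin (M+1)) : 0 ≤ C x b i :=
  tsum_nonneg fun n => ht_nonneg x b i (n+1)

lemma sum_Icc_ht_le (hx : ∀ i, ‖x i‖ < 1) (i : Fin (M+1)) (k : ℕ) :
    ∑ j ∈ Icc 1 k, ht x b i j ≤ C x b i := by
  have h1 : ∑ j ∈ Icc 1 k, ht x b i j = ∑ j ∈ Finset.range k, ht x b i (1 + j) := by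
    rw [show Icc 1 k = Ico 1 (k+1) by rfl, Finset.sum_Ico_eq_sum_range]
    simp
  rw [h1]
  have h2 := Summable.sum_le_tsum (Finset.range k) (fun n _ => ht_nonneg x b i (n+1))
    (summable_ht_succ x b hx i)
  simpa [add_comm, C] using h2

/-- The hyperpyramid (without the gcd condition). -/
abbrev Pyr (M : ℕ) := {a : Fin (M+1) → ℕ //
  (∀ i, 0 < a i) ∧ ∀ i : Fin (M+1), (i : ℕ) < M → a i ≤ a (Fin.last M)}

/-- Visible points of the hyperpyramid. -/
abbrev Vis (M : ℕ) := {a : Fin (M+1) → ℕ //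
  (∀ i, 0 < a i) ∧ (∀ i : Fin (M+1), (i : ℕ) < M → a i ≤ a (Fin.last M)) ∧
    Finset.univ.gcd a = 1}

variable (M) in
/-- The last (dominant) coordinate of a pyramid point, as a positive natural. -/
def lastC (a : Pyr M) : ℕ+ := ⟨a.1 (Fin.last M), a.2.1 _⟩

variable (M) in
/-- The slice of the pyramid at a given last coordinate. -/
def fEquiv (k : ℕ+) :
    ↥(Fintype.piFinset fun _ : Fin M => Finset.Icc 1 (k:ℕ)) ≃
      {p : Pyr M // lastC M p = k} where
  toFun g := ⟨⟨Fin.snoc g.1 (k : ℕ), by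
      intro i
      induction i using Fin.lastCases with
      | last => simpa using k.2
      | cast j =>
        have := (Fintype.mem_piFinset.mp g.2) j
        rw [Finset.mem_Icc] at this
        simpa using Nat.lt_of_lt_of_le Nat.zero_lt_one this.1, by
      intro i hi
      have h2 : i = Fin.castSucc ⟨(i:ℕ), hi⟩ := by
        apply Fin.ext; simp
      rw [Fin.snoc_last, h2, Fin.snoc_castSucc]
      have := (Fintype.mem_piFinset.mp g.2) ⟨(i:ℕ), hi⟩
      rw [Finset.mem_Icc] at this
      exact this.2⟩, by
    apply PNat.coe_injective
    simp [lastC]⟩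
  invFun p := ⟨fun i => p.1.1 i.castSucc, by
    rw [Fintype.mem_piFinset]
    intro i
    rw [Finset.mem_Icc]
    refine ⟨p.1.2.1 _, ?_⟩
    have h1 := p.1.2.2 i.castSucc (by simp)
    have h2 : p.1.1 (Fin.last M) = (k:ℕ) := congrArg PNat.val p.2
    omega⟩
  left_inv g := by
    apply Subtype.ext
    funext i
    simp
  right_inv p := by
    apply Subtype.ext
    apply Subtype.ext
    funext i
    induction i using Fin.lastCases with
    | last =>
      have h2 : p.1.1 (Fin.last M) = (k:ℕ) := congrArg PNat.val p.2
      simpa using h2.symm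
    | cast j => simp

variable (M) in
/-- Slicing the pyramid by the last coordinate. -/
def sliceEquiv :
    (Σ k : ℕ+, ↥(Fintype.piFinset fun _ : Fin M => Finset.Icc 1 (k:ℕ))) ≃ Pyr M :=
  (Equiv.sigmaCongrRight (fEquiv M)).trans (Equiv.sigmaFiberEquiv (lastC M))

lemma gcd_pos {a : Fin (M+1) → ℕ} (ha : ∀ i, 0 < a i) : 0 < Finset.univ.gcd a := by
  rcases Nat.eq_zero_or_pos (Finset.univ.gcd a) with h | h
  · exact absurd (Finset.gcd_eq_zero_iff.mp h (Fin.last M) (Finset.mem_univ _))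
      (ha (Fin.last M)).ne'
  · exact h

variable (M) in
/-- Scaling decomposition: every pyramid point is a unique multiple of a visible point. -/
def scaleEquiv : Vis M × ℕ+ ≃ Pyr M where
  toFun p := ⟨fun i => (p.2 : ℕ) * p.1.1 i,
    fun i => Nat.mul_pos p.2.2 (p.1.2.1 i),
    fun i hi => Nat.mul_le_mul_left _ (p.1.2.2.1 i hi)⟩
  invFun a :=
    ⟨⟨fun i => a.1 i / Finset.univ.gcd a.1,
      fun i => Nat.div_pos (Nat.le_of_dvd (a.2.1 i) (Finset.gcd_dvd (Finset.mem_univ i)))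
        (gcd_pos a.2.1),
      fun i hi => Nat.div_le_div_right (a.2.2 i hi),
      Finset.gcd_div_eq_one (Finset.mem_univ (Fin.last M)) (a.2.1 _).ne'⟩,
     ⟨Finset.univ.gcd a.1, gcd_pos a.2.1⟩⟩
  left_inv := by
    rintro ⟨⟨v, hv1, hv2, hv3⟩, m⟩
    have hd : (Finset.univ.gcd fun i => (m:ℕ) * v i) = (m:ℕ) := by
      rw [Finset.gcd_mul_left, hv3, mul_one, normalize_eq]
    refine Prod.ext ?_ ?_
    · apply Subtype.ext
      funext i
      show (m:ℕ) * v i / (Finset.univ.gcd fun i => (m:ℕ) * v i) = v i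
      rw [hd]
      exact Nat.mul_div_cancel_left _ m.2
    · apply PNat.coe_injective
      exact hd
  right_inv := by
    rintro ⟨a, ha1, ha2⟩
    apply Subtype.ext
    funext i
    exact Nat.mul_div_cancel' (Finset.gcd_dvd (Finset.mem_univ i))


lemma sliceEquiv_fst (k : ℕ+) (g : ↥(Fintype.piFinset fun _ : Fin M => Finset.Icc 1 (k:ℕ))) :
    ((sliceEquiv M ⟨k, g⟩).1 : Fin (M+1) → ℕ) = Fin.snoc (α := fun _ => ℕ) g.1 (k : ℕ) := rfl

lemma prod_ht_snoc (k : ℕ+) (g : Fin M → ℕ) :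
    ∏ i, ht x b i (Fin.snoc (α := fun _ => ℕ) g (k:ℕ) i) =
      (∏ i : Fin M, ht x b i.castSucc (g i)) * ht x b (Fin.last M) k := by
  rw [Fin.prod_univ_castSucc]
  simp

lemma pos_of_mem_piFinset {k : ℕ+} {g : Fin M → ℕ}
    (hg : g ∈ Fintype.piFinset fun _ : Fin M => Finset.Icc 1 (k:ℕ)) (i : Fin (M+1)) :
    0 < Fin.snoc (α := fun _ => ℕ) g (k:ℕ) i := by
  induction i using Fin.lastCases with
  | last => simpa using k.2
  | cast j =>
    have := Fintype.mem_piFinset.mp hg j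
    rw [Finset.mem_Icc] at this
    simpa using Nat.lt_of_lt_of_le Nat.zero_lt_one this.1

lemma tsum_fiber_norm (hx : ∀ i, ‖x i‖ < 1) (k : ℕ+) :
    ∑' g : ↥(Fintype.piFinset fun _ : Fin M => Finset.Icc 1 (k:ℕ)),
      ‖F x b ((sliceEquiv M ⟨k, g⟩).1)‖ =
    (∏ i : Fin M, ∑ j ∈ Finset.Icc 1 (k:ℕ), ht x b i.castSucc j) *
      ht x b (Fin.last M) k := by
  simp only [sliceEquiv_fst]
  rw [tsum_fintype, Finset.univ_eq_attach]
  have h1 : ∀ g ∈ (Fintype.piFinset fun _ : Fin M => Finset.Icc 1 (k:ℕ)),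
      ‖F x b (Fin.snoc (α := fun _ => ℕ) g (k:ℕ))‖ =
        (∏ i : Fin M, ht x b i.castSucc (g i)) * ht x b (Fin.last M) k := by
    intro g hg
    rw [norm_F x b (pos_of_mem_piFinset hg), prod_ht_snoc]
  calc ∑ g ∈ (Fintype.piFinset fun _ : Fin M => Finset.Icc 1 (k:ℕ)).attach,
        ‖F x b (Fin.snoc (α := fun _ => ℕ) g.1 (k:ℕ))‖
      = ∑ g ∈ (Fintype.piFinset fun _ : Fin M => Finset.Icc 1 (k:ℕ)),
          (∏ i : Fin M, ht x b i.castSucc (g i)) * ht x b (Fin.last M) k := by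
        rw [Finset.sum_attach _ fun g => ‖F x b (Fin.snoc (α := fun _ => ℕ) g (k:ℕ))‖]
        exact Finset.sum_congr rfl h1
    _ = (∏ i : Fin M, ∑ j ∈ Finset.Icc 1 (k:ℕ), ht x b i.castSucc j) *
          ht x b (Fin.last M) k := by
        rw [← Finset.sum_mul, Finset.sum_prod_piFinset]

lemma summable_norm_F (hx : ∀ i, ‖x i‖ < 1) :
    Summable fun p : Pyr M => ‖F x b p.1‖ := by
  rw [← (sliceEquiv M).summable_iff]
  apply (summable_sigma_of_nonneg fun _ => norm_nonneg _).mpr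
  refine ⟨fun k => Summable.of_finite, ?_⟩
  have hbound : ∀ k : ℕ+,
      ∑' g : ↥(Fintype.piFinset fun _ : Fin M => Finset.Icc 1 (k:ℕ)),
        ‖F x b ((sliceEquiv M ⟨k, g⟩).1)‖ ≤
      (∏ i : Fin M, C x b i.castSucc) * ht x b (Fin.last M) k := by
    intro k
    rw [tsum_fiber_norm x b hx k]
    apply mul_le_mul_of_nonneg_right _ (ht_nonneg x b _ _)
    apply Finset.prod_le_prod
    · intro i _
      exact Finset.sum_nonneg fun j _ => ht_nonneg x b _ _
    · intro i _
      exact sum_Icc_ht_le x b hx i.castSucc (k:ℕ)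
  refine Summable.of_nonneg_of_le
    (fun k => tsum_nonneg fun g => norm_nonneg _) hbound ?_
  exact (summable_ht_pnat x b hx (Fin.last M)).mul_left _

lemma summable_F (hx : ∀ i, ‖x i‖ < 1) : Summable fun p : Pyr M => F x b p.1 :=
  (summable_norm_F x b hx).of_norm

lemma F_snoc (k : ℕ+) (g : Fin M → ℕ) :
    F x b (Fin.snoc (α := fun _ => ℕ) g (k:ℕ)) =
      (∏ i : Fin M, (x i.castSucc ^ g i / (g i : ℂ) ^ b i.castSucc)) *
        (x (Fin.last M) ^ (k:ℕ) / ((k:ℕ):ℂ) ^ b (Fin.last M)) := by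
  rw [F, Fin.prod_univ_castSucc]
  simp

lemma tsum_F_slice (hx : ∀ i, ‖x i‖ < 1) :
    ∑' p : Pyr M, F x b p.1 =
      ∑' k : ℕ+, (∏ i : Fin M, ∑ j ∈ Finset.Icc 1 (k:ℕ),
          x i.castSucc ^ j / (j : ℂ) ^ b i.castSucc) *
        (x (Fin.last M) ^ (k:ℕ) / ((k:ℕ):ℂ) ^ b (Fin.last M)) := by
  rw [← (sliceEquiv M).tsum_eq]
  have hs : Summable fun c : (Σ k : ℕ+, ↥(Fintype.piFinset fun _ : Fin M => Finset.Icc 1 (k:ℕ))) =>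
      F x b ((sliceEquiv M c).1) :=
    Summable.congr (((sliceEquiv M).summable_iff
      (f := fun p : Pyr M => F x b p.1)).mpr (summable_F x b hx)) fun _ => rfl
  rw [hs.tsum_sigma]
  congr 1
  funext k
  simp only [sliceEquiv_fst]
  rw [tsum_fintype, Finset.univ_eq_attach]
  calc ∑ g ∈ (Fintype.piFinset fun _ : Fin M => Finset.Icc 1 (k:ℕ)).attach,
        F x b (Fin.snoc (α := fun _ => ℕ) g.1 (k:ℕ))
      = ∑ g ∈ (Fintype.piFinset fun _ : Fin M => Finset.Icc 1 (k:ℕ)),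
          (∏ i : Fin M, (x i.castSucc ^ g i / (g i : ℂ) ^ b i.castSucc)) *
            (x (Fin.last M) ^ (k:ℕ) / ((k:ℕ):ℂ) ^ b (Fin.last M)) := by
        rw [Finset.sum_attach _ fun g => F x b (Fin.snoc (α := fun _ => ℕ) g (k:ℕ))]
        exact Finset.sum_congr rfl fun g _ => F_snoc x b k g
    _ = _ := by rw [← Finset.sum_mul, Finset.prod_univ_sum]


lemma cpow_sum' {z : ℂ} (hz : z ≠ 0) {ι : Type*} (s : Finset ι) (f : ι → ℂ) :
    z ^ (∑ i ∈ s, f i) = ∏ i ∈ s, z ^ f i := by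
  rw [Complex.cpow_def_of_ne_zero hz, Finset.mul_sum, Complex.exp_sum]
  exact Finset.prod_congr rfl fun i _ => (Complex.cpow_def_of_ne_zero hz _).symm

lemma norm_z_lt (hx : ∀ i, ‖x i‖ < 1) {v : Fin (M+1) → ℕ} (hv : ∀ i, 0 < v i) :
    ‖∏ i, x i ^ v i‖ < 1 := by
  rw [norm_prod]
  simp only [norm_pow]
  calc ∏ i, ‖x i‖ ^ v i
      ≤ ∏ i, (if i = Fin.last M then ‖x (Fin.last M)‖ else 1) := by
        refine Finset.prod_le_prod (fun i _ => by positivity) (fun i _ => ?_)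
        by_cases h : i = Fin.last M
        · subst h
          simp only [if_pos rfl]
          exact pow_le_of_le_one (norm_nonneg _) (hx _).le (hv _).ne'
        · rw [if_neg h]
          exact pow_le_one₀ (norm_nonneg _) (hx i).le
    _ = ‖x (Fin.last M)‖ := by rw [Finset.prod_ite_eq' Finset.univ]; simp
    _ < 1 := hx _

lemma scaleEquiv_fst (v : Vis M) (m : ℕ+) :
    ((scaleEquiv M (v, m)).1 : Fin (M+1) → ℕ) = fun i => (m : ℕ) * v.1 i := rfl

lemma F_scale (hb : ∑ i, b i = 1) (v : Vis M) (m : ℕ+) :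
    F x b ((scaleEquiv M (v, m)).1) =
      (1 / ∏ i, ((v.1 i : ℂ) ^ b i)) * ((∏ i, x i ^ v.1 i) ^ (m:ℕ) / ((m:ℕ):ℂ)) := by
  rw [scaleEquiv_fst, F, Finset.prod_div_distrib]
  have hnum : ∏ i, x i ^ ((m:ℕ) * v.1 i) = (∏ i, x i ^ v.1 i) ^ (m:ℕ) := by
    rw [← Finset.prod_pow]
    exact Finset.prod_congr rfl fun i _ => by rw [← pow_mul, mul_comm]
  have hden : ∏ i, (((m:ℕ) * v.1 i : ℕ) : ℂ) ^ b i =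
      ((m:ℕ):ℂ) * ∏ i, ((v.1 i : ℂ) ^ b i) := by
    have h1 : ∀ i, (((m:ℕ) * v.1 i : ℕ) : ℂ) ^ b i =
        ((m:ℕ):ℂ) ^ b i * ((v.1 i : ℕ) : ℂ) ^ b i := by
      intro i
      rw [Nat.cast_mul]
      exact Complex.natCast_mul_natCast_cpow _ _ _
    rw [Finset.prod_congr rfl fun i _ => h1 i, Finset.prod_mul_distrib,
      ← cpow_sum' (by exact_mod_cast m.2.ne') Finset.univ b, hb, Complex.cpow_one]
  rw [hnum, hden]
  ring

lemma hasSum_scale (hx : ∀ i, ‖x i‖ < 1) (hb : ∑ i, b i = 1) (v : Vis M) :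
    HasSum (fun m : ℕ+ => F x b ((scaleEquiv M (v, m)).1))
      ((1 / ∏ i, ((v.1 i : ℂ) ^ b i)) *
        (-Complex.log (1 - ∏ i, x i ^ v.1 i))) := by
  set z := ∏ i, x i ^ v.1 i with hz
  have hzlt : ‖z‖ < 1 := norm_z_lt x hx v.2.1
  have h0 : HasSum (fun n : ℕ => z ^ n / (n:ℂ)) (-Complex.log (1 - z)) :=
    hasSum_taylorSeries_neg_log hzlt
  have h1 : HasSum (fun m : ℕ+ => z ^ (m:ℕ) / ((m:ℕ):ℂ)) (-Complex.log (1 - z)) := by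
    refine (Function.Injective.hasSum_iff PNat.coe_injective ?_).mpr h0
    intro n hn
    have : n = 0 := by
      by_contra h
      exact hn ⟨⟨n, Nat.pos_of_ne_zero h⟩, rfl⟩
    subst this
    simp
  have h2 := h1.mul_left (1 / ∏ i, ((v.1 i : ℂ) ^ b i))
  refine h2.congr_fun fun m => ?_
  rw [F_scale x b hb v m]

lemma hasSum_exponents (hx : ∀ i, ‖x i‖ < 1) (hb : ∑ i, b i = 1) :
    HasSum (fun v : Vis M => (1 / ∏ i, ((v.1 i : ℂ) ^ b i)) *
        (-Complex.log (1 - ∏ i, x i ^ v.1 i)))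
      (∑' p : Pyr M, F x b p.1) := by
  have hsum : Summable fun p : Vis M × ℕ+ => F x b ((scaleEquiv M p).1) :=
    Summable.congr (((scaleEquiv M).summable_iff
      (f := fun p : Pyr M => F x b p.1)).mpr (summable_F x b hx)) fun _ => rfl
  have hS : HasSum (fun p : Vis M × ℕ+ => F x b ((scaleEquiv M p).1))
      (∑' p : Pyr M, F x b p.1) := by
    have h := hsum.hasSum
    rwa [show (∑' p : Vis M × ℕ+, F x b ((scaleEquiv M p).1)) =
      ∑' p : Pyr M, F x b p.1 from (scaleEquiv M).tsum_eq (fun p : Pyr M => F x b p.1)] at h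
  exact hS.prod_fiberwise fun v => hasSum_scale x b hx hb v

lemma filter_prod (f : Fin (M+1) → ℂ) :
    ∏ i ∈ Finset.univ.filter (fun i : Fin (M+1) => (i:ℕ) < M), f i =
      ∏ i : Fin M, f i.castSucc := by
  refine Finset.prod_bij
    (i := fun a ha => (⟨(a:ℕ), by simpa using (Finset.mem_filter.mp ha).2⟩ : Fin M))
    (fun a ha => Finset.mem_univ _) ?_ ?_ ?_
  · intro a ha a' ha' h
    apply Fin.ext
    simpa using congrArg Fin.val h
  · intro j _
    refine ⟨j.castSucc, Finset.mem_filter.mpr ⟨Finset.mem_univ _, by simp⟩, by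
      apply Fin.ext; simp⟩
  · intro a ha
    have : a = Fin.castSucc (⟨(a:ℕ), by simpa using (Finset.mem_filter.mp ha).2⟩ : Fin M) := by
      apply Fin.ext; simp
    rw [← this]

theorem main (hx : ∀ i, ‖x i‖ < 1) (hb : ∑ i, b i = 1) :
    (∏' v : Vis M, (1 / (1 - ∏ i, x i ^ v.1 i)) ^ (1 / ∏ i, ((v.1 i : ℂ) ^ b i))) =
    Complex.exp (∑' k : ℕ+,
      (∏ i ∈ Finset.univ.filter (fun i : Fin (M+1) => (i : ℕ) < M),
        ∑ j ∈ Finset.Icc 1 (k : ℕ), x i ^ j / (j : ℂ) ^ b i) *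
      x (Fin.last M) ^ (k : ℕ) / ((k : ℕ) : ℂ) ^ b (Fin.last M)) := by
  have hG := hasSum_exponents x b hx hb
  have hfactor : ∀ v : Vis M,
      (1 / (1 - ∏ i, x i ^ v.1 i)) ^ (1 / ∏ i, ((v.1 i : ℂ) ^ b i)) =
      Complex.exp ((1 / ∏ i, ((v.1 i : ℂ) ^ b i)) *
        (-Complex.log (1 - ∏ i, x i ^ v.1 i))) := by
    intro v
    set z := ∏ i, x i ^ v.1 i with hzdef
    have hzlt : ‖z‖ < 1 := norm_z_lt x hx v.2.1
    have h1 : 1 - z ≠ 0 := by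
      intro h
      have : z = 1 := by linear_combination -h
      rw [this] at hzlt
      simp at hzlt
    have harg : (1 - z).arg ≠ Real.pi := by
      intro h
      rw [Complex.arg_eq_pi_iff] at h
      have hre : z.re ≤ ‖z‖ := Complex.re_le_norm z
      have h2 : (1 - z).re = 1 - z.re := by simp
      rw [h2] at h
      have h3 : ‖z‖ < 1 := hzlt
      linarith [h.1]
    rw [one_div (1 - z), Complex.cpow_def_of_ne_zero (inv_ne_zero h1),
      Complex.log_inv _ harg, mul_comm]
  calc (∏' v : Vis M, (1 / (1 - ∏ i, x i ^ v.1 i)) ^ (1 / ∏ i, ((v.1 i : ℂ) ^ b i)))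
      = ∏' v : Vis M, Complex.exp ((1 / ∏ i, ((v.1 i : ℂ) ^ b i)) *
          (-Complex.log (1 - ∏ i, x i ^ v.1 i))) := tprod_congr hfactor
    _ = Complex.exp (∑' p : Pyr M, F x b p.1) := hG.cexp.tprod_eq
    _ = _ := by
        rw [tsum_F_slice x b hx]
        congr 1
        refine tsum_congr fun k => ?_
        rw [filter_prod, mul_div_assoc]

end VPVaux

/-- The N-dimensional first-hyperquadrant hyperpyramid Visible Point Vector identity. -/
theorem stmt_11 (N : ℕ) (hN : 2 ≤ N) (x b : Fin N → ℂ)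
    (hx : ∀ i, ‖x i‖ < 1) (hb : ∑ i, b i = 1) :
    (∏' a : {a : Fin N → ℕ // (∀ i, 0 < a i) ∧
        (∀ i : Fin N, (i : ℕ) < N - 1 → a i ≤ a ⟨N - 1, by omega⟩) ∧
        Finset.univ.gcd a = 1},
      (1 / (1 - ∏ i, x i ^ a.val i)) ^ (1 / ∏ i, ((a.val i : ℂ) ^ b i))) =
    Complex.exp (∑' k : ℕ+,
      (∏ i ∈ Finset.univ.filter (fun i : Fin N => (i : ℕ) < N - 1),
        ∑ j ∈ Finset.Icc 1 (k : ℕ), x i ^ j / (j : ℂ) ^ b i) *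
      x ⟨N - 1, by omega⟩ ^ (k : ℕ) / ((k : ℕ) : ℂ) ^ b ⟨N - 1, by omega⟩) := by
  obtain ⟨M, rfl⟩ : ∃ M, N = M + 1 := ⟨N - 1, by omega⟩
  exact VPVaux.main x b hx hb
end
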